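/- arXiv:2303.02144 — 4 statements merged into one kernel-verified Lean document; each statement's English description precedes it below -/
import Mathlib

section
/- Counting bound: Let X be a set of size N, H an l-bounded family of subsets of X, and w a nonnegative integer. For each W ⊆ X with |W| = w, let G_W be the family of minimal elements of {S \ W : S ∈ H} of size greater than 0.9 l. Then for each integer k, the number of pairs (W, S') with |W| = w, S' ∈ G_W, |S'| = k is at most C(N, w+k) · C(l, k). -/
open Finset
open scoped Classical

/-- p-biased measure of a family of subsets of `Fin N`. -/
noncomputable def mu (N : ℕ) (p : ℝ) (F : Finset (Finset (Fin N))) : ℝ :=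
  ∑ S ∈ F, p ^ S.card * (1 - p) ^ (N - S.card)

/-- Expected number of members: `E_p(|G|) = Σ_{S∈G} p^{|S|}`. -/
noncomputable def Ep (N : ℕ) (p : ℝ) (G : Finset (Finset (Fin N))) : ℝ :=
  ∑ S ∈ G, p ^ S.card

/-- Upward closure `⟨G⟩`: all subsets of `Fin N` containing a member of `G`. -/
noncomputable def cl (N : ℕ) (G : Finset (Finset (Fin N))) : Finset (Finset (Fin N)) :=
  Finset.univ.filter (fun T => ∃ S ∈ G, S ⊆ T)

/-- `G` covers `F`: every member of `F` contains a member of `G`, i.e. `F ⊆ ⟨G⟩`. -/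
def Covers (N : ℕ) (G F : Finset (Finset (Fin N))) : Prop :=
  ∀ S ∈ F, ∃ T ∈ G, T ⊆ S

/-- Cover cost `f(H)`: infimum of `E_p(|G|)` over families `G` covering `H`. -/
noncomputable def coverCost (N : ℕ) (p : ℝ) (H : Finset (Finset (Fin N))) : ℝ :=
  sInf {x : ℝ | ∃ G : Finset (Finset (Fin N)), Covers N G H ∧ x = Ep N p G}

/-- The `m`-th level: all `m`-element subsets of `Fin N`. -/
noncomputable def level (N m : ℕ) : Finset (Finset (Fin N)) :=
  Finset.powersetCard m Finset.univ

/-- `G_W`: minimal elements of `H_W = {S \ W : S ∈ H}` of size greater than `0.9 l`. -/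
noncomputable def GW (N : ℕ) (H : Finset (Finset (Fin N))) (l : ℕ) (W : Finset (Fin N)) :
    Finset (Finset (Fin N)) :=
  (H.image (fun S => S \ W)).filter
    (fun T => (∀ T' ∈ H.image (fun S => S \ W), T' ⊆ T → T' = T) ∧
      (0.9 * (l : ℝ) < (T.card : ℝ)))


/-- Counting bound: the number of pairs `(W, S')` with `|W| = w`, `S' ∈ G_W`, `|S'| = k`
is at most `C(N, w+k) · C(l, k)`. -/
theorem counting_pairs {N : ℕ} (l w k : ℕ) (H : Finset (Finset (Fin N)))
    (hbdd : ∀ S ∈ H, S.card ≤ l) :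
    ∑ W ∈ Finset.powersetCard w (Finset.univ : Finset (Fin N)),
        ((GW N H l W).filter (fun S' => S'.card = k)).card ≤
      N.choose (w + k) * l.choose k := by
  classical
  set A := Finset.powersetCard w (Finset.univ : Finset (Fin N)) with hA
  set s := A.sigma (fun W => (GW N H l W).filter (fun S' => S'.card = k)) with hs
  have hsum : ∑ W ∈ A, ((GW N H l W).filter (fun S' => S'.card = k)).card = s.card := by
    rw [hs, Finset.card_sigma]
  rw [hsum]
  -- basic facts about elements of s
  have hmem : ∀ x ∈ s, x.1.card = w ∧ x.2.card = k ∧ Disjoint x.1 x.2 ∧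
      (∃ S ∈ H, S \ x.1 = x.2) ∧
      (∀ T' ∈ H.image (fun S => S \ x.1), T' ⊆ x.2 → T' = x.2) := by
    intro x hx
    rw [hs, Finset.mem_sigma] at hx
    obtain ⟨hW, hS⟩ := hx
    rw [Finset.mem_filter] at hS
    obtain ⟨hG, hk⟩ := hS
    rw [GW, Finset.mem_filter] at hG
    obtain ⟨himg, hmin, _⟩ := hG
    rw [Finset.mem_image] at himg
    obtain ⟨S, hSH, hSeq⟩ := himg
    refine ⟨(Finset.mem_powersetCard.mp hW).2, hk, ?_, ⟨S, hSH, hSeq⟩, ?_⟩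
    · rw [← hSeq]; exact Finset.sdiff_disjoint.symm
    · intro T' hT' hsub
      exact hmin T' hT' hsub
  have key : s.card ≤ l.choose k * (s.image (fun x => x.1 ∪ x.2)).card := by
    apply Finset.card_le_mul_card_image
    intro U hU
    set t := s.filter (fun x => x.1 ∪ x.2 = U) with ht
    rcases t.eq_empty_or_nonempty with he | ⟨x₀, hx₀⟩
    · simp [← ht, he]
    · obtain ⟨hx₀s, hx₀U⟩ := Finset.mem_filter.mp hx₀
      obtain ⟨_, _, _, ⟨S₁, hS₁H, hS₁eq⟩, _⟩ := hmem x₀ hx₀s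
      have hS₁U : S₁ ⊆ U := by
        rw [← hx₀U]
        intro a ha
        by_cases h : a ∈ x₀.1
        · exact Finset.mem_union_left _ h
        · exact Finset.mem_union_right _ (hS₁eq ▸ Finset.mem_sdiff.mpr ⟨ha, h⟩)
      have hsub : ∀ x ∈ t, x.2 ⊆ S₁ ∧ x.2.card = k := by
        intro x hx
        obtain ⟨hxs, hxU⟩ := Finset.mem_filter.mp hx
        obtain ⟨_, hk, hdisj, _, hmin⟩ := hmem x hxs
        have h1 : S₁ \ x.1 ⊆ x.2 := by
          intro a ha
          rw [Finset.mem_sdiff] at ha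
          have : a ∈ x.1 ∪ x.2 := hxU ▸ hS₁U ha.1
          rcases Finset.mem_union.mp this with h | h
          · exact absurd h ha.2
          · exact h
        have h2 : S₁ \ x.1 = x.2 :=
          hmin _ (Finset.mem_image.mpr ⟨S₁, hS₁H, rfl⟩) h1
        exact ⟨h2 ▸ Finset.sdiff_subset, hk⟩
      calc t.card ≤ (Finset.powersetCard k S₁).card := by
            apply Finset.card_le_card_of_injOn (fun x => x.2)
            · intro x hx
              rw [Finset.mem_coe, Finset.mem_powersetCard]
              exact hsub x hx
            · intro x hx y hy hxy
              have hxy' : x.2 = y.2 := hxy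
              obtain ⟨hxs, hxU⟩ := Finset.mem_filter.mp hx
              obtain ⟨hys, hyU⟩ := Finset.mem_filter.mp hy
              obtain ⟨_, _, hdx, _, _⟩ := hmem x hxs
              obtain ⟨_, _, hdy, _, _⟩ := hmem y hys
              have h1 : x.1 = U \ x.2 := by
                rw [← hxU, Finset.union_sdiff_cancel_right hdx]
              have h2 : y.1 = U \ y.2 := by
                rw [← hyU, Finset.union_sdiff_cancel_right hdy]
              have : x.1 = y.1 := by rw [h1, h2, hxy']
              exact Sigma.ext this (heq_of_eq hxy')
        _ = (S₁.card).choose k := Finset.card_powersetCard k S₁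
        _ ≤ l.choose k := Nat.choose_le_choose k (hbdd S₁ hS₁H)
  have himg : s.image (fun x => x.1 ∪ x.2) ⊆ Finset.powersetCard (w + k) Finset.univ := by
    intro U hU
    rw [Finset.mem_image] at hU
    obtain ⟨x, hx, rfl⟩ := hU
    obtain ⟨hw, hk, hdisj, _, _⟩ := hmem x hx
    rw [Finset.mem_powersetCard]
    exact ⟨Finset.subset_univ _, by rw [Finset.card_union_of_disjoint hdisj, hw, hk]⟩
  calc s.card ≤ l.choose k * (s.image (fun x => x.1 ∪ x.2)).card := key
    _ ≤ l.choose k * (Finset.powersetCard (w + k) (Finset.univ : Finset (Fin N))).card :=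
        Nat.mul_le_mul_left _ (Finset.card_le_card himg)
    _ = N.choose (w + k) * l.choose k := by
        rw [Finset.card_powersetCard, Finset.card_univ, Fintype.card_fin, Nat.mul_comm]
end

section
/- Park–Pham covering theorem (inductive form): There is a constant L (L = 1000 suffices) such that for all integers 0 ≤ l ≤ N, any p ∈ (0,1], any set X of size N, and any l-bounded family H of subsets of X with cover cost f(H) ≥ 1/2 − 1/2^{l+2}, the upward closure ⟨H⟩ contains at least a (2/3 + 1/2^{l+2}) fraction of the level L_{m_l}, where m_l = ⌊L p N log₂(l+1)⌋ (interpreting the conclusion vacuously if m_l > N). -/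
open Finset
open scoped Classical

set_option linter.unusedSectionVars false
set_option maxHeartbeats 4000000

section PPaux
variable {α : Type*} [DecidableEq α]

noncomputable def EpA (p : ℝ) (G : Finset (Finset α)) : ℝ := ∑ S ∈ G, p ^ S.card

def CoversA (G F : Finset (Finset α)) : Prop := ∀ S ∈ F, ∃ T ∈ G, T ⊆ S

noncomputable def costA (p : ℝ) (H : Finset (Finset α)) : ℝ :=
  sInf {x : ℝ | ∃ G : Finset (Finset α), CoversA G H ∧ x = EpA p G}

lemma EpA_nonneg {p : ℝ} (hp : 0 ≤ p) (G : Finset (Finset α)) : 0 ≤ EpA p G :=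
  Finset.sum_nonneg fun _ _ => pow_nonneg hp _

lemma costA_le {p : ℝ} (hp : 0 ≤ p) {G H : Finset (Finset α)} (h : CoversA G H) :
    costA p H ≤ EpA p G := by
  apply csInf_le
  · exact ⟨0, fun x ⟨G', _, hx⟩ => hx ▸ EpA_nonneg hp G'⟩
  · exact ⟨G, h, rfl⟩

lemma le_costA {p b : ℝ} {H : Finset (Finset α)}
    (h : ∀ G : Finset (Finset α), CoversA G H → b ≤ EpA p G) : b ≤ costA p H := by
  apply le_csInf
  · exact ⟨EpA p H, H, fun S hS => ⟨S, hS, subset_rfl⟩, rfl⟩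
  · rintro x ⟨G, hG, rfl⟩; exact h G hG

lemma EpA_union_le {p : ℝ} (hp : 0 ≤ p) (G₁ G₂ : Finset (Finset α)) :
    EpA p (G₁ ∪ G₂) ≤ EpA p G₁ + EpA p G₂ := by
  unfold EpA
  have h := Finset.sum_union_inter (s₁ := G₁) (s₂ := G₂) (f := fun S => p ^ S.card)
  have h2 : (0:ℝ) ≤ ∑ S ∈ G₁ ∩ G₂, p ^ S.card := Finset.sum_nonneg fun _ _ => pow_nonneg hp _
  linarith

noncomputable def mfr (H : Finset (Finset α)) (Z : Finset α) : Finset (Finset α) :=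
  (H.image fun S => S \ Z).filter fun T => ∀ T' ∈ H.image fun S => S \ Z, T' ⊆ T → T' = T

lemma mfr_spec {H : Finset (Finset α)} {Z T : Finset α} (h : T ∈ mfr H Z) :
    (∃ S ∈ H, S \ Z = T) ∧ ∀ T' ∈ H.image fun S => S \ Z, T' ⊆ T → T' = T := by
  rw [mfr, Finset.mem_filter, Finset.mem_image] at h
  exact h

lemma exists_mfr {H : Finset (Finset α)} {Z S : Finset α} (hS : S ∈ H) :
    ∃ T ∈ mfr H Z, T ⊆ S \ Z := by
  classical
  have hne : ((H.image fun S => S \ Z).filter fun T => T ⊆ S \ Z).Nonempty :=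
    ⟨S \ Z, by simp only [Finset.mem_filter, Finset.mem_image]; exact ⟨⟨S, hS, rfl⟩, subset_rfl⟩⟩
  obtain ⟨T, hT, hmin⟩ : ∃ T, T ∈ ((H.image fun S => S \ Z).filter fun T => T ⊆ S \ Z) ∧
      ∀ ⦃y⦄, y ∈ ((H.image fun S => S \ Z).filter fun T => T ⊆ S \ Z) → y ≤ T → T ≤ y :=
    Finset.exists_minimal hne
  rw [Finset.mem_filter] at hT
  refine ⟨T, ?_, hT.2⟩
  rw [mfr, Finset.mem_filter]
  refine ⟨hT.1, fun T' hT' hsub => ?_⟩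
  have hT'mem : T' ∈ (H.image fun S => S \ Z).filter fun T => T ⊆ S \ Z :=
    Finset.mem_filter.2 ⟨hT', hsub.trans hT.2⟩
  by_contra hne'
  exact hne' (le_antisymm hsub (hmin hT'mem hsub))

noncomputable def pick (H : Finset (Finset α)) (Z' : Finset α) : Finset α :=
  if h : ((H.filter fun S => S ⊆ Z').Nonempty) then h.choose else ∅

lemma pick_spec {H : Finset (Finset α)} {Z' : Finset α} (h : ∃ S ∈ H, S ⊆ Z') :
    pick H Z' ∈ H ∧ pick H Z' ⊆ Z' := by
  obtain ⟨S, hS, hsub⟩ := h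
  have hne : ((H.filter fun S => S ⊆ Z').Nonempty) := ⟨S, Finset.mem_filter.2 ⟨hS, hsub⟩⟩
  rw [pick, dif_pos hne]
  have := hne.choose_spec
  rw [Finset.mem_filter] at this
  exact this

lemma pick_card_le {H : Finset (Finset α)} {l : ℕ} (hHl : ∀ S ∈ H, S.card ≤ l)
    (Z' : Finset α) : (pick H Z').card ≤ l := by
  rw [pick]
  split
  · next h => exact hHl _ (Finset.mem_filter.mp h.choose_spec).1
  · simp

lemma subset_union_sdiff' (S Z : Finset α) : S ⊆ Z ∪ (S \ Z) := by
  intro x hx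
  by_cases hxZ : x ∈ Z <;> simp [hxZ, hx]

lemma mfr_sub_pick {H : Finset (Finset α)} {Z T : Finset α} (hT : T ∈ mfr H Z) :
    T ⊆ pick H (Z ∪ T) ∧ pick H (Z ∪ T) ∈ H := by
  obtain ⟨⟨S, hS, hST⟩, hmin⟩ := mfr_spec hT
  have hSsub : S ⊆ Z ∪ T := by rw [← hST]; exact subset_union_sdiff' S Z
  obtain ⟨hmem, hsub⟩ := pick_spec ⟨S, hS, hSsub⟩
  set S₀ := pick H (Z ∪ T) with hS₀
  have h1 : S₀ \ Z ⊆ T := by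
    intro x hx
    rw [Finset.mem_sdiff] at hx
    have := hsub hx.1
    rw [Finset.mem_union] at this
    tauto
  have h2 : S₀ \ Z = T := hmin _ (Finset.mem_image_of_mem _ hmem) h1
  exact ⟨h2 ▸ sdiff_subset, hmem⟩

noncomputable def smallF (l' : ℕ) (H : Finset (Finset α)) (Z : Finset α) : Finset (Finset α) :=
  (mfr H Z).filter fun T => T.card ≤ l'

noncomputable def bigF (l' : ℕ) (H : Finset (Finset α)) (Z : Finset α) : Finset (Finset α) :=
  (mfr H Z).filter fun T => l' < T.card

lemma costA_step {p : ℝ} (hp : 0 < p) (l' : ℕ) (H : Finset (Finset α)) (Z : Finset α) :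
    costA p H - EpA p (bigF l' H Z) ≤ costA p (smallF l' H Z) := by
  apply le_costA
  intro G' hG'
  have hcov : CoversA (G' ∪ bigF l' H Z) H := by
    intro S hS
    obtain ⟨T, hT, hTs⟩ := exists_mfr (Z := Z) hS
    have hTsub : T ⊆ S := hTs.trans sdiff_subset
    by_cases h : T.card ≤ l'
    · obtain ⟨U, hU, hUT⟩ := hG' T (Finset.mem_filter.2 ⟨hT, h⟩)
      exact ⟨U, Finset.mem_union_left _ hU, hUT.trans hTsub⟩
    · exact ⟨T, Finset.mem_union_right _ (Finset.mem_filter.2 ⟨hT, by omega⟩), hTsub⟩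
  have h1 := costA_le hp.le hcov
  have h2 := EpA_union_le hp.le G' (bigF l' H Z)
  linarith

lemma pair_count {l : ℕ} (H : Finset (Finset α)) (X : Finset α) (hHX : ∀ S ∈ H, S ⊆ X)
    (hHl : ∀ S ∈ H, S.card ≤ l) (l' w t : ℕ) :
    ∑ Z ∈ powersetCard w X, ((bigF l' H Z).filter fun T => T.card = t).card
      ≤ (X.card.choose (w+t)) * l.choose t := by
  classical
  rw [← Finset.card_sigma]
  have hmaps : ∀ q ∈ (powersetCard w X).sigma fun Z => (bigF l' H Z).filter fun T => T.card = t,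
      (⟨q.1 ∪ q.2, q.2⟩ : (_ : Finset α) × Finset α) ∈
        (powersetCard (w+t) X).sigma fun Z' => powersetCard t (pick H Z') := by
    rintro ⟨Z, T⟩ hq
    rw [Finset.mem_sigma] at hq
    obtain ⟨hZ, hT⟩ := hq
    rw [Finset.mem_filter] at hT
    obtain ⟨hTbig, hTcard⟩ := hT
    have hTm : T ∈ mfr H Z := (Finset.mem_filter.mp hTbig).1
    obtain ⟨⟨S, hS, hST⟩, _⟩ := mfr_spec hTm
    have hdisj : Disjoint Z T := by rw [← hST]; exact disjoint_sdiff
    rw [Finset.mem_powersetCard] at hZ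
    have hTX : T ⊆ X := by rw [← hST]; exact sdiff_subset.trans (hHX S hS)
    rw [Finset.mem_sigma]
    constructor
    · rw [Finset.mem_powersetCard]
      exact ⟨Finset.union_subset hZ.1 hTX, by rw [Finset.card_union_of_disjoint hdisj, hZ.2, hTcard]⟩
    · rw [Finset.mem_powersetCard]
      exact ⟨(mfr_sub_pick hTm).1, hTcard⟩
  have hinj : Set.InjOn (fun q : (_ : Finset α) × Finset α => (⟨q.1 ∪ q.2, q.2⟩ : (_ : Finset α) × Finset α))
      ((powersetCard w X).sigma fun Z => (bigF l' H Z).filter fun T => T.card = t) := by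
    rintro ⟨Z₁, T₁⟩ h₁ ⟨Z₂, T₂⟩ h₂ heq
    simp only [Sigma.mk.inj_iff] at heq
    obtain ⟨hU, hT⟩ := heq
    have hT' : T₁ = T₂ := eq_of_heq hT
    subst hT'
    rw [Finset.mem_coe, Finset.mem_sigma] at h₁ h₂
    dsimp only at h₁ h₂
    have d₁ : Disjoint Z₁ T₁ := by
      obtain ⟨⟨S, hS, hST⟩, _⟩ := mfr_spec (Finset.mem_filter.mp (Finset.mem_filter.mp h₁.2).1).1
      exact hST ▸ (disjoint_sdiff : Disjoint _ (S \ _))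
    have d₂ : Disjoint Z₂ T₁ := by
      obtain ⟨⟨S, hS, hST⟩, _⟩ := mfr_spec (Finset.mem_filter.mp (Finset.mem_filter.mp h₂.2).1).1
      exact hST ▸ (disjoint_sdiff : Disjoint _ (S \ _))
    have : Z₁ = Z₂ := by
      have e₁ : (Z₁ ∪ T₁) \ T₁ = Z₁ := d₁.sup_sdiff_cancel_right
      have e₂ : (Z₂ ∪ T₁) \ T₁ = Z₂ := d₂.sup_sdiff_cancel_right
      rw [← e₁, ← e₂, hU]
    subst this
    rfl
  calc ((powersetCard w X).sigma fun Z => (bigF l' H Z).filter fun T => T.card = t).card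
      ≤ ((powersetCard (w+t) X).sigma fun Z' => powersetCard t (pick H Z')).card :=
        Finset.card_le_card_of_injOn _ hmaps hinj
    _ = ∑ Z' ∈ powersetCard (w+t) X, ((pick H Z').card.choose t) := by
        rw [Finset.card_sigma]
        exact Finset.sum_congr rfl fun Z' _ => Finset.card_powersetCard _ _
    _ ≤ ∑ _Z' ∈ powersetCard (w+t) X, l.choose t :=
        Finset.sum_le_sum fun Z' _ => Nat.choose_le_choose t (pick_card_le hHl Z')
    _ = (X.card.choose (w+t)) * l.choose t := by
        rw [Finset.sum_const, Finset.card_powersetCard, smul_eq_mul]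

lemma choose_ratio (n w : ℕ) : ∀ t : ℕ, (n.choose (w+t)) * w^t ≤ (n.choose w) * n^t := by
  intro t
  induction t with
  | zero => simp
  | succ t ih =>
    have h1 : n.choose (w+t+1) * (w+t+1) = n.choose (w+t) * (n - (w+t)) :=
      Nat.choose_succ_right_eq n (w+t)
    have h2 : n.choose (w+(t+1)) * w ≤ n.choose (w+t) * n := by
      calc n.choose (w+t+1) * w ≤ n.choose (w+t+1) * (w+t+1) :=
            Nat.mul_le_mul_left _ (by omega)
        _ = n.choose (w+t) * (n - (w+t)) := h1
        _ ≤ n.choose (w+t) * n := Nat.mul_le_mul_left _ (by omega)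
    calc n.choose (w+(t+1)) * w^(t+1) = (n.choose (w+(t+1)) * w) * w^t := by ring
      _ ≤ (n.choose (w+t) * n) * w^t := Nat.mul_le_mul_right _ h2
      _ = (n.choose (w+t) * w^t) * n := by ring
      _ ≤ (n.choose w * n^t) * n := Nat.mul_le_mul_right _ ih
      _ = n.choose w * n^(t+1) := by ring

lemma choose_le_two_pow' (l t : ℕ) : l.choose t ≤ 2^l := by
  by_cases h : t ≤ l
  · calc l.choose t ≤ ∑ i ∈ Finset.range (l+1), l.choose i :=
        Finset.single_le_sum (f := fun i => l.choose i) (fun _ _ => Nat.zero_le _)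
          (Finset.mem_range.2 (by omega))
    _ = 2^l := Nat.sum_range_choose l
  · rw [Nat.choose_eq_zero_of_lt (by omega)]; exact Nat.zero_le _

lemma geo_bound (a b : ℕ) : ∑ t ∈ Finset.Icc a b, ((1:ℝ)/128)^t ≤ 2 * (1/128)^a := by
  have h1 : Finset.Icc a b = Finset.Ico a (b+1) := by rw [Finset.Ico_add_one_right_eq_Icc]
  rw [h1, Finset.sum_Ico_eq_sum_range]
  have h2 : ∀ i ∈ Finset.range (b+1-a), ((1:ℝ)/128)^(a+i) = (1/128)^a * (1/128)^i := by
    intro i _; rw [pow_add]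
  rw [Finset.sum_congr rfl h2, ← Finset.mul_sum]
  have h3 : ∑ i ∈ Finset.range (b+1-a), ((1:ℝ)/128)^i ≤ 2 := by
    rw [geom_sum_eq (by norm_num)]
    have h4 : (0:ℝ) ≤ (1/128:ℝ)^(b+1-a) := by positivity
    have h5 : ((1/128:ℝ))^(b+1-a) ≤ 1 := pow_le_one₀ (by norm_num) (by norm_num)
    rw [div_le_iff_of_neg (by norm_num)]
    linarith
  have h6 : (0:ℝ) ≤ (1/128:ℝ)^a := by positivity
  nlinarith

lemma per_t (n w t l l' : ℕ) (p : ℝ) (hp : 0 < p) (hw1 : 512*(p*n) ≤ w) (hwpos : 0 < w)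
    (ht : l' + 1 ≤ t) (hl : l' = l/2)
    (hcr : ((n.choose (w+t)):ℝ) * (w:ℝ)^t ≤ ((n.choose w):ℝ) * (n:ℝ)^t)
    (hct : ((l.choose t):ℝ) ≤ 2^l) :
    p^t * (((n.choose (w+t)):ℝ) * ((l.choose t):ℝ)) ≤ (1/128)^t * ((n.choose w):ℝ) := by
  set a := ((n.choose (w+t)):ℝ) with ha
  set b := ((n.choose w):ℝ) with hb
  set c := ((l.choose t):ℝ) with hc
  have hWpos : (0:ℝ) < (w:ℝ) := by exact_mod_cast hwpos
  have hWtpos : (0:ℝ) < (w:ℝ)^t := by positivity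
  have hb0 : 0 ≤ b := Nat.cast_nonneg _
  have hc0 : 0 ≤ c := Nat.cast_nonneg _
  have key : p^t * a ≤ b * ((p*(n:ℝ))/(w:ℝ))^t := by
    have h1 : p^t * (a * (w:ℝ)^t) ≤ p^t * (b * (n:ℝ)^t) :=
      mul_le_mul_of_nonneg_left hcr (pow_nonneg hp.le t)
    have h2 : b * ((p*(n:ℝ))/(w:ℝ))^t = (p^t * (b * (n:ℝ)^t))/(w:ℝ)^t := by
      rw [div_pow, mul_pow]; field_simp
    rw [h2, le_div_iff₀ hWtpos]
    calc p^t * a * (w:ℝ)^t = p^t * (a * (w:ℝ)^t) := by ring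
      _ ≤ p^t * (b * (n:ℝ)^t) := h1
  have hfrac : ((p*(n:ℝ))/(w:ℝ))^t ≤ (1/512)^t := by
    apply pow_le_pow_left₀ (by positivity)
    rw [div_le_div_iff₀ hWpos (by norm_num)]
    linarith
  have hc4 : c ≤ 4^t := by
    calc c ≤ 2^l := hct
      _ ≤ (2:ℝ)^(2*t) := by
          apply pow_le_pow_right₀ (by norm_num)
          omega
      _ = 4^t := by rw [pow_mul]; norm_num
  calc p^t * (a * c) = (p^t * a) * c := by ring
    _ ≤ (b * ((p*(n:ℝ))/(w:ℝ))^t) * c := mul_le_mul_of_nonneg_right key hc0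
    _ ≤ (b * (1/512)^t) * 4^t := by
        apply mul_le_mul
        · exact mul_le_mul_of_nonneg_left hfrac hb0
        · exact hc4
        · exact hc0
        · positivity
    _ = (1/128)^t * b := by
        rw [mul_assoc, ← mul_pow]
        norm_num
        ring

lemma numeric_eps (l l' : ℕ) (hl : l' = l/2) (hlpos : 1 ≤ l) :
    2 * ((1:ℝ)/128)^(l'+1) ≤ (1/2^(l+2))^2 := by
  rw [div_pow, div_pow, one_pow, one_pow, mul_one_div,
    div_le_div_iff₀ (by positivity) (by positivity)]
  rw [← pow_mul]
  calc (2:ℝ) * 2^((l+2)*2) = 2^((l+2)*2+1) := by rw [pow_succ]; ring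
    _ ≤ 2^(7*(l'+1)) := by apply pow_le_pow_right₀ (by norm_num); omega
    _ = 128^(l'+1) := by rw [show (128:ℝ) = 2^7 by norm_num, ← pow_mul]
    _ ≤ 1 * 128^(l'+1) := by rw [one_mul]

lemma Epsum (l l' w : ℕ) (H : Finset (Finset α)) (X : Finset α) (p : ℝ)
    (hp : 0 < p) (hHX : ∀ S ∈ H, S ⊆ X) (hHl : ∀ S ∈ H, S.card ≤ l)
    (hl' : l' = l/2) (hlpos : 1 ≤ l)
    (hw1 : 512 * (p * X.card) ≤ w) (hwpos : 0 < w) :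
    ∑ Z ∈ powersetCard w X, EpA p (bigF l' H Z)
      ≤ (1/2^(l+2))^2 * (X.card.choose w) := by
  classical
  set n := X.card with hn
  have e1 : ∀ Z ∈ powersetCard w X, EpA p (bigF l' H Z)
      = ∑ t ∈ Finset.Icc (l'+1) l, p^t * (((bigF l' H Z).filter fun T => T.card = t).card : ℝ) := by
    intro Z _
    rw [EpA]
    rw [← Finset.sum_fiberwise_of_maps_to (g := Finset.card) (t := Finset.Icc (l'+1) l) ?_]
    · apply Finset.sum_congr rfl
      intro t ht
      have e2 : ∀ T ∈ (bigF l' H Z).filter (fun T => T.card = t), p ^ T.card = p^t := by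
        intro T hT
        rw [(Finset.mem_filter.mp hT).2]
      rw [Finset.sum_congr rfl e2, Finset.sum_const, nsmul_eq_mul, mul_comm]
    · intro T hT
      rw [bigF, Finset.mem_filter] at hT
      obtain ⟨⟨S, hS, hST⟩, _⟩ := mfr_spec hT.1
      rw [Finset.mem_Icc]
      constructor
      · omega
      · calc T.card ≤ S.card := hST ▸ Finset.card_le_card sdiff_subset
          _ ≤ l := hHl S hS
  rw [Finset.sum_congr rfl e1, Finset.sum_comm]
  have e3 : ∀ t ∈ Finset.Icc (l'+1) l,
      ∑ Z ∈ powersetCard w X, p^t * (((bigF l' H Z).filter fun T => T.card = t).card : ℝ)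
        ≤ (1/128)^t * (n.choose w : ℝ) := by
    intro t ht
    rw [Finset.mem_Icc] at ht
    rw [← Finset.mul_sum]
    have e4 : ∑ Z ∈ powersetCard w X, (((bigF l' H Z).filter fun T => T.card = t).card : ℝ)
        ≤ ((n.choose (w+t) : ℕ) : ℝ) * ((l.choose t : ℕ) : ℝ) := by
      rw [← Nat.cast_sum]
      have := pair_count H X hHX hHl l' w t
      calc ((∑ Z ∈ powersetCard w X, ((bigF l' H Z).filter fun T => T.card = t).card : ℕ) : ℝ)
          ≤ ((n.choose (w+t) * l.choose t : ℕ) : ℝ) := by exact_mod_cast this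
        _ = _ := by push_cast; ring
    calc p^t * ∑ Z ∈ powersetCard w X, (((bigF l' H Z).filter fun T => T.card = t).card : ℝ)
        ≤ p^t * (((n.choose (w+t)):ℝ) * ((l.choose t):ℝ)) :=
          mul_le_mul_of_nonneg_left e4 (pow_nonneg hp.le t)
      _ ≤ (1/128)^t * ((n.choose w):ℝ) := by
          apply per_t n w t l l' p hp hw1 hwpos ht.1 hl'
          · exact_mod_cast choose_ratio n w t
          · exact_mod_cast choose_le_two_pow' l t
  calc ∑ t ∈ Finset.Icc (l'+1) l, ∑ Z ∈ powersetCard w X,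
        p^t * (((bigF l' H Z).filter fun T => T.card = t).card : ℝ)
      ≤ ∑ t ∈ Finset.Icc (l'+1) l, (1/128)^t * (n.choose w : ℝ) := Finset.sum_le_sum e3
    _ = (∑ t ∈ Finset.Icc (l'+1) l, ((1:ℝ)/128)^t) * (n.choose w : ℝ) := by
        rw [Finset.sum_mul]
    _ ≤ (2 * (1/128)^(l'+1)) * (n.choose w : ℝ) :=
        mul_le_mul_of_nonneg_right (geo_bound _ _) (Nat.cast_nonneg _)
    _ ≤ (1/2^(l+2))^2 * (n.choose w : ℝ) :=
        mul_le_mul_of_nonneg_right (numeric_eps l l' hl' hlpos) (Nat.cast_nonneg _)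

theorem auxPP (l : ℕ) : ∀ (X : Finset α) (p : ℝ), 0 < p → p ≤ 1 →
    ∀ H : Finset (Finset α), (∀ S ∈ H, S ⊆ X) → (∀ S ∈ H, S.card ≤ l) →
    costA p H ≥ 1/2 - 1/2^(l+2) →
    ∀ m : ℕ, 2000 * p * X.card * Real.logb 2 (l+1) < m + 1 → m ≤ X.card →
    (((powersetCard m X).filter fun W => ∃ S ∈ H, S ⊆ W).card : ℝ)
      ≥ (2/3 + 1/2^(l+2)) * (X.card.choose m) := by
  induction l using Nat.strong_induction_on with
  | _ l IH =>
  intro X p hp hp1 H hHX hHl hcost m hm hmX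
  have hpow4 : (4:ℝ) ≤ 2^(l+2) := by
    calc (4:ℝ) = 2^2 := by norm_num
    _ ≤ 2^(l+2) := by apply pow_le_pow_right₀ (by norm_num) (by omega)
  have hpowpos : (0:ℝ) < 2^(l+2) := by positivity
  have hε4 : (1:ℝ)/2^(l+2) ≤ 1/4 := by
    rw [div_le_div_iff₀ hpowpos (by norm_num)]; linarith
  have hεpos : (0:ℝ) < 1/2^(l+2) := by positivity
  by_cases hempty : ∅ ∈ H
  · have heq : (powersetCard m X).filter (fun W => ∃ S ∈ H, S ⊆ W) = powersetCard m X := by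
      apply Finset.filter_true_of_mem
      intro W _; exact ⟨∅, hempty, Finset.empty_subset _⟩
    rw [heq, Finset.card_powersetCard]
    have h0 : (0:ℝ) ≤ (X.card.choose m : ℝ) := Nat.cast_nonneg _
    nlinarith
  have hHne : H.Nonempty := by
    by_contra h
    rw [Finset.not_nonempty_iff_eq_empty] at h
    have h1 : costA p H ≤ 0 := by
      have hc : CoversA (∅ : Finset (Finset α)) H := by intro S hS; rw [h] at hS; simp at hS
      have := costA_le hp.le hc
      simpa [EpA] using this
    linarith
  rcases Nat.eq_zero_or_pos l with hl0 | hlpos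
  · exfalso
    obtain ⟨S₁, hS₁⟩ := hHne
    have hc := hHl S₁ hS₁
    rw [hl0] at hc
    have : S₁ = ∅ := Finset.card_eq_zero.mp (Nat.le_zero.mp hc)
    exact hempty (this ▸ hS₁)
  -- main inductive step
  set N' : ℝ := (X.card : ℝ) with hN'
  have hpow8 : (8:ℝ) ≤ 2^(l+2) := by
    calc (8:ℝ) = 2^3 := by norm_num
    _ ≤ 2^(l+2) := by apply pow_le_pow_right₀ (by norm_num) (by omega)
  have hε8 : (1:ℝ)/2^(l+2) ≤ 1/8 := by
    rw [div_le_div_iff₀ hpowpos (by norm_num)]; linarith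
  -- p * N' ≥ 3/8 via singleton cover
  have hq : (3:ℝ)/8 ≤ p * N' := by
    have hcov : CoversA (X.image fun x => ({x} : Finset α)) H := by
      intro S hS
      have hSne : S.Nonempty := Finset.nonempty_iff_ne_empty.2 (fun h => hempty (h ▸ hS))
      obtain ⟨x, hx⟩ := hSne
      exact ⟨{x}, Finset.mem_image_of_mem _ (hHX S hS hx), Finset.singleton_subset_iff.2 hx⟩
    have h1 := costA_le hp.le hcov
    have h2 : EpA p (X.image fun x => ({x} : Finset α)) ≤ N' * p := by
      unfold EpA
      have he : ∀ T ∈ X.image (fun x => ({x} : Finset α)), p ^ T.card = p := by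
        intro T hT
        obtain ⟨x, _, rfl⟩ := Finset.mem_image.mp hT
        simp
      rw [Finset.sum_congr rfl he, Finset.sum_const, nsmul_eq_mul]
      have hcile := Finset.card_image_le (s := X) (f := fun x => ({x} : Finset α))
      have : ((X.image fun x => ({x} : Finset α)).card : ℝ) ≤ N' := by
        rw [hN']; exact_mod_cast hcile
      exact mul_le_mul_of_nonneg_right this hp.le
    nlinarith
  -- log facts
  set lam := Real.logb 2 (l+1) with hlamdef
  set l' := l / 2 with hl'def
  have hl'lt : l' < l := Nat.div_lt_self hlpos one_lt_two
  set lam' := Real.logb 2 (l'+1) with hlam'def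
  have hone_le : (1:ℝ) ≤ (l':ℝ) + 1 := by
    have : (0:ℝ) ≤ (l':ℝ) := Nat.cast_nonneg _
    linarith
  have htwo_le : (2:ℝ) ≤ (l:ℝ) + 1 := by
    have : (1:ℝ) ≤ (l:ℝ) := by exact_mod_cast hlpos
    linarith
  have hlam1 : 1 ≤ lam := by
    rw [hlamdef]
    calc (1:ℝ) = Real.logb 2 2 := (Real.logb_self_eq_one (by norm_num)).symm
      _ ≤ Real.logb 2 (l+1) := Real.logb_le_logb_of_le (by norm_num) (by norm_num) htwo_le
  have hlam'0 : 0 ≤ lam' := Real.logb_nonneg (by norm_num) hone_le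
  have hhalf : lam' + 1/2 ≤ lam := by
    have key : (2:ℝ) * ((l':ℝ)+1)^2 ≤ ((l:ℝ)+1)^2 := by
      have keyn : 2 * (l'+1)^2 ≤ (l+1)^2 := by
        rw [hl'def]
        rcases Nat.even_or_odd l with ⟨s, hs⟩ | ⟨s, hs⟩
        · subst hs
          have hq2 : (s+s)/2 = s := by omega
          rw [hq2]
          have hq1 : 1 ≤ s := by omega
          nlinarith
        · subst hs
          have hq2 : (2*s+1)/2 = s := by omega
          rw [hq2]
          nlinarith
      exact_mod_cast keyn
    have e1 : Real.logb 2 (2 * ((l':ℝ)+1)^2) = 1 + 2 * lam' := by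
      rw [Real.logb_mul (by norm_num) (by positivity), Real.logb_pow,
        Real.logb_self_eq_one (by norm_num), hlam'def]
      push_cast; ring
    have e2 : Real.logb 2 (((l:ℝ)+1)^2) = 2 * lam := by
      rw [Real.logb_pow, hlamdef]; push_cast; ring
    have hmono : Real.logb 2 (2 * ((l':ℝ)+1)^2) ≤ Real.logb 2 (((l:ℝ)+1)^2) :=
      Real.logb_le_logb_of_le (by norm_num) (by positivity) key
    rw [e1, e2] at hmono
    linarith
  -- w
  set w := ⌈(512:ℝ) * (p * N')⌉₊ with hwdef
  have hw1 : 512 * (p*N') ≤ w := Nat.le_ceil _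
  have hw2 : (w:ℝ) ≤ 512*(p*N') + 1 := le_of_lt (Nat.ceil_lt_add_one (by positivity))
  have hw3 : (w:ℝ) ≤ 515 * (p*N') := by nlinarith
  have hwpos : 0 < w := by
    rw [hwdef, Nat.ceil_pos]; nlinarith
  have hmcast : 2000 * (p * N') * lam < (m:ℝ) + 1 := by
    have := hm; push_cast at this ⊢; nlinarith [this]
  have hwm : (w:ℝ) < m := by nlinarith
  have hwm' : w ≤ m := by
    have : w < m := by exact_mod_cast hwm
    omega
  have hwn : w ≤ X.card := le_trans hwm' hmX
  -- the two key families of bad objects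
  set B := (powersetCard m X).filter (fun W => ¬ ∃ S ∈ H, S ⊆ W) with hBdef
  set BadZ := (powersetCard w X).filter (fun Z => 1/2^(l+2) < EpA p (bigF l' H Z)) with hBadZdef
  -- Markov bound on BadZ
  have hBadcard : (BadZ.card : ℝ) ≤ 1/2^(l+2) * (X.card.choose w) := by
    have h1 : (BadZ.card : ℝ) * (1/2^(l+2)) ≤ ∑ Z ∈ BadZ, EpA p (bigF l' H Z) := by
      have h1a := Finset.sum_le_sum (s := BadZ) (f := fun _ => (1:ℝ)/2^(l+2))
        (g := fun Z => EpA p (bigF l' H Z))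
        (fun Z hZ => by
          rw [hBadZdef] at hZ
          exact le_of_lt (Finset.mem_filter.mp hZ).2)
      rw [Finset.sum_const, nsmul_eq_mul] at h1a
      exact h1a
    have h2 : ∑ Z ∈ BadZ, EpA p (bigF l' H Z) ≤ ∑ Z ∈ powersetCard w X, EpA p (bigF l' H Z) := by
      apply Finset.sum_le_sum_of_subset_of_nonneg
      · rw [hBadZdef]; exact Finset.filter_subset _ _
      · exact fun Z _ _ => EpA_nonneg hp.le _
    have h3 := Epsum l l' w H X p hp hHX hHl hl'def hlpos (by rw [← hN']; exact hw1) hwpos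
    have := h1.trans (h2.trans h3)
    exact le_of_mul_le_mul_right (by nlinarith) hεpos
  -- fiber bound for all Z
  have hfib_all : ∀ Z ∈ powersetCard w X,
      ((B.filter fun W => Z ⊆ W).card : ℝ) ≤ (((X.card - w).choose (m-w) : ℕ) : ℝ) := by
    intro Z hZ
    rw [Finset.mem_powersetCard] at hZ
    have hXZcard : (X \ Z).card = X.card - w := by rw [Finset.card_sdiff_of_subset hZ.1, hZ.2]
    have hcard := Finset.card_le_card_of_injOn (f := fun W => W \ Z)
      (s := B.filter fun W => Z ⊆ W) (t := powersetCard (m-w) (X \ Z)) ?_ ?_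
    · calc ((B.filter fun W => Z ⊆ W).card : ℝ)
          ≤ ((powersetCard (m-w) (X \ Z)).card : ℝ) := by exact_mod_cast hcard
        _ = _ := by rw [Finset.card_powersetCard, hXZcard]
    · intro W hW
      rw [Finset.mem_coe, Finset.mem_filter] at hW
      obtain ⟨hWB, hZW⟩ := hW
      rw [hBdef, Finset.mem_filter] at hWB
      have hWpc := hWB.1
      rw [Finset.mem_powersetCard] at hWpc
      rw [Finset.mem_coe, Finset.mem_powersetCard]
      exact ⟨Finset.sdiff_subset_sdiff hWpc.1 (le_refl _),
        by rw [Finset.card_sdiff_of_subset hZW, hWpc.2, hZ.2]⟩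
    · rintro W₁ h₁ W₂ h₂ heq
      rw [Finset.mem_coe, Finset.mem_filter] at h₁ h₂
      have e₁ : W₁ \ Z ∪ Z = W₁ := Finset.sdiff_union_of_subset h₁.2
      have e₂ : W₂ \ Z ∪ Z = W₂ := Finset.sdiff_union_of_subset h₂.2
      have heq' : W₁ \ Z = W₂ \ Z := heq
      rw [← e₁, ← e₂, heq']
  -- fiber bound for good Z, via the induction hypothesis
  have hfib_good : ∀ Z ∈ powersetCard w X, Z ∉ BadZ →
      ((B.filter fun W => Z ⊆ W).card : ℝ)
        ≤ (1/3 - 2 * (1/2^(l+2))) * (((X.card - w).choose (m-w) : ℕ) : ℝ) := by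
    intro Z hZmem hZgood
    have hZ := hZmem
    rw [Finset.mem_powersetCard] at hZ
    have hXZcard : (X \ Z).card = X.card - w := by rw [Finset.card_sdiff_of_subset hZ.1, hZ.2]
    have hEpZ : EpA p (bigF l' H Z) ≤ 1/2^(l+2) := by
      by_contra hcon
      push_neg at hcon
      exact hZgood (by rw [hBadZdef]; exact Finset.mem_filter.2 ⟨hZmem, hcon⟩)
    have hl'pow : (2:ℝ) * 2^(l'+2) ≤ 2^(l+2) := by
      calc (2:ℝ) * 2^(l'+2) = 2^(l'+3) := by rw [pow_succ]; ring
        _ ≤ 2^(l+2) := by apply pow_le_pow_right₀ (by norm_num); omega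
    have hl'powpos : (0:ℝ) < 2^(l'+2) := by positivity
    have h2eps : (2:ℝ)/2^(l+2) ≤ 1/2^(l'+2) := by
      rw [div_le_div_iff₀ hpowpos hl'powpos]
      nlinarith
    have hcost' : costA p (smallF l' H Z) ≥ 1/2 - 1/2^(l'+2) := by
      have h1 := costA_step hp l' H Z
      have : (1:ℝ)/2 - 2/2^(l+2) ≤ costA p H - EpA p (bigF l' H Z) := by
        have : (1:ℝ)/2 - 1/2^(l+2) - 1/2^(l+2) = 1/2 - 2/2^(l+2) := by ring
        linarith
      linarith
    have hbound' : ∀ S ∈ smallF l' H Z, S.card ≤ l' := fun S hS => (Finset.mem_filter.mp hS).2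
    have hsubs' : ∀ S ∈ smallF l' H Z, S ⊆ X \ Z := by
      intro T hT
      obtain ⟨⟨S, hS, hST⟩, _⟩ := mfr_spec (Finset.mem_filter.mp hT).1
      rw [← hST]
      exact Finset.sdiff_subset_sdiff (hHX S hS) (le_refl _)
    have hmn' : m - w ≤ (X \ Z).card := by
      rw [hXZcard]; exact Nat.sub_le_sub_right hmX w
    have hm' : 2000 * p * ((X \ Z).card : ℝ) * Real.logb 2 (l'+1) < ((m - w : ℕ) : ℝ) + 1 := by
      have hc1 : ((X \ Z).card : ℝ) = N' - w := by
        rw [hXZcard, hN', Nat.cast_sub hwn]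
      have hc2 : ((m - w : ℕ) : ℝ) = (m:ℝ) - w := Nat.cast_sub hwm'
      rw [hc1, hc2]
      have hw0 : (0:ℝ) ≤ (w:ℝ) := Nat.cast_nonneg _
      have h1 : 2000 * p * (N' - w) * lam' ≤ 2000 * (p*N') * lam' := by
        have hcoef : (0:ℝ) ≤ 2000 * p * lam' := by positivity
        nlinarith
      have h2 : 2000 * (p*N') * lam' ≤ 2000 * (p*N') * lam - 1000*(p*N') := by
        have hcoef : (0:ℝ) ≤ 2000 * (p*N') := by nlinarith
        nlinarith
      have h4 : (w:ℝ) ≤ 1000 * (p*N') := by nlinarith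
      have := hmcast
      rw [← hlam'def]
      linarith
    have hIH := IH l' hl'lt (X \ Z) p hp hp1 (smallF l' H Z) hsubs' hbound' hcost' (m-w) hm' hmn'
    rw [hXZcard] at hIH
    have hsplit := Finset.card_filter_add_card_filter_not
      (s := powersetCard (m-w) (X \ Z)) (p := fun W' => ∃ S ∈ smallF l' H Z, S ⊆ W')
    have htot : ((powersetCard (m-w) (X \ Z)).card) = (X.card - w).choose (m-w) := by
      rw [Finset.card_powersetCard, hXZcard]
    have hbad' : (((powersetCard (m-w) (X \ Z)).filter fun W' => ¬ ∃ S ∈ smallF l' H Z, S ⊆ W').card : ℝ)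
        ≤ (1/3 - 1/2^(l'+2)) * (((X.card - w).choose (m-w) : ℕ) : ℝ) := by
      have hcast : (((powersetCard (m-w) (X \ Z)).filter fun W' => ∃ S ∈ smallF l' H Z, S ⊆ W').card : ℝ)
          + (((powersetCard (m-w) (X \ Z)).filter fun W' => ¬ ∃ S ∈ smallF l' H Z, S ⊆ W').card : ℝ)
          = (((X.card - w).choose (m-w) : ℕ) : ℝ) := by
        rw [← htot]
        exact_mod_cast hsplit
      linarith
    have hinj2 : ((B.filter fun W => Z ⊆ W).card)
        ≤ (((powersetCard (m-w) (X \ Z)).filter fun W' => ¬ ∃ S ∈ smallF l' H Z, S ⊆ W').card) := by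
      apply Finset.card_le_card_of_injOn (fun W => W \ Z)
      · intro W hW
        rw [Finset.mem_coe, Finset.mem_filter] at hW
        obtain ⟨hWB, hZW⟩ := hW
        rw [hBdef, Finset.mem_filter] at hWB
        obtain ⟨hWpc, hWnot⟩ := hWB
        rw [Finset.mem_powersetCard] at hWpc
        rw [Finset.mem_coe, Finset.mem_filter, Finset.mem_powersetCard]
        refine ⟨⟨Finset.sdiff_subset_sdiff hWpc.1 (le_refl _),
          by rw [Finset.card_sdiff_of_subset hZW, hWpc.2, hZ.2]⟩, ?_⟩
        rintro ⟨T, hT, hTsub⟩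
        obtain ⟨⟨S, hS, hST⟩, _⟩ := mfr_spec (Finset.mem_filter.mp hT).1
        apply hWnot
        refine ⟨S, hS, ?_⟩
        calc S ⊆ Z ∪ (S \ Z) := subset_union_sdiff' S Z
          _ = Z ∪ T := by rw [hST]
          _ ⊆ W := Finset.union_subset hZW (hTsub.trans sdiff_subset)
      · rintro W₁ h₁ W₂ h₂ heq
        rw [Finset.mem_coe, Finset.mem_filter] at h₁ h₂
        have e₁ : W₁ \ Z ∪ Z = W₁ := Finset.sdiff_union_of_subset h₁.2
        have e₂ : W₂ \ Z ∪ Z = W₂ := Finset.sdiff_union_of_subset h₂.2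
        have heq' : W₁ \ Z = W₂ \ Z := heq
        rw [← e₁, ← e₂, heq']
    have hchain : ((B.filter fun W => Z ⊆ W).card : ℝ)
        ≤ (1/3 - 1/2^(l'+2)) * (((X.card - w).choose (m-w) : ℕ) : ℝ) := by
      calc ((B.filter fun W => Z ⊆ W).card : ℝ)
          ≤ (((powersetCard (m-w) (X \ Z)).filter fun W' => ¬ ∃ S ∈ smallF l' H Z, S ⊆ W').card : ℝ) := by
            exact_mod_cast hinj2
        _ ≤ _ := hbad'
    have hfinal : (1:ℝ)/3 - 1/2^(l'+2) ≤ 1/3 - 2*(1/2^(l+2)) := by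
      have : (2:ℝ)*(1/2^(l+2)) = 2/2^(l+2) := by ring
      linarith [h2eps]
    calc ((B.filter fun W => Z ⊆ W).card : ℝ) ≤ _ := hchain
      _ ≤ (1/3 - 2 * (1/2^(l+2))) * (((X.card - w).choose (m-w) : ℕ) : ℝ) :=
          mul_le_mul_of_nonneg_right hfinal (Nat.cast_nonneg _)
  -- double counting identity
  have hdouble : ∑ Z ∈ powersetCard w X, ((B.filter fun W => Z ⊆ W).card)
      = B.card * m.choose w := by
    calc ∑ Z ∈ powersetCard w X, ((B.filter fun W => Z ⊆ W).card)
        = ∑ Z ∈ powersetCard w X, ∑ W ∈ B, if Z ⊆ W then 1 else 0 := by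
          apply Finset.sum_congr rfl
          intro Z _
          rw [Finset.card_filter]
      _ = ∑ W ∈ B, ∑ Z ∈ powersetCard w X, if Z ⊆ W then 1 else 0 := Finset.sum_comm
      _ = ∑ W ∈ B, ((powersetCard w X).filter fun Z => Z ⊆ W).card := by
          apply Finset.sum_congr rfl
          intro W _
          rw [Finset.card_filter]
      _ = ∑ _W ∈ B, m.choose w := by
          apply Finset.sum_congr rfl
          intro W hW
          have hWmem := hW
          rw [hBdef] at hWmem
          have hWpc : W ∈ powersetCard m X := (Finset.mem_filter.mp hWmem).1
          rw [Finset.mem_powersetCard] at hWpc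
          have heqf : (powersetCard w X).filter (fun Z => Z ⊆ W) = powersetCard w W := by
            ext Z
            simp only [Finset.mem_filter, Finset.mem_powersetCard]
            constructor
            · rintro ⟨⟨_, hc⟩, hZW⟩; exact ⟨hZW, hc⟩
            · rintro ⟨hZW, hc⟩; exact ⟨⟨hZW.trans hWpc.1, hc⟩, hZW⟩
          rw [heqf, Finset.card_powersetCard, hWpc.2]
      _ = B.card * m.choose w := by rw [Finset.sum_const, smul_eq_mul]
  -- assemble
  set Cw := (X.card.choose w : ℝ) with hCw
  set C2 := (((X.card - w).choose (m-w) : ℕ) : ℝ) with hC2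
  have hC20 : 0 ≤ C2 := Nat.cast_nonneg _
  have hCw0 : 0 ≤ Cw := Nat.cast_nonneg _
  have hsum_split := Finset.sum_filter_add_sum_filter_not (powersetCard w X)
    (fun Z => 1/2^(l+2) < EpA p (bigF l' H Z))
    (fun Z => ((B.filter fun W => Z ⊆ W).card : ℝ))
  have hsum1 : ∑ Z ∈ BadZ, ((B.filter fun W => Z ⊆ W).card : ℝ)
      ≤ (BadZ.card : ℝ) * C2 := by
    have := Finset.sum_le_sum (s := BadZ)
      (f := fun Z => ((B.filter fun W => Z ⊆ W).card : ℝ)) (g := fun _ => C2)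
      (fun Z hZ => by
        rw [hBadZdef] at hZ
        exact hfib_all Z (Finset.mem_of_mem_filter Z hZ))
    rw [Finset.sum_const, nsmul_eq_mul] at this
    exact this
  have hGoodZsub : ((powersetCard w X).filter fun Z => ¬ (1/2^(l+2) < EpA p (bigF l' H Z))) ⊆ powersetCard w X :=
    Finset.filter_subset _ _
  have hsum2 : ∑ Z ∈ (powersetCard w X).filter (fun Z => ¬ (1/2^(l+2) < EpA p (bigF l' H Z))),
        ((B.filter fun W => Z ⊆ W).card : ℝ)
      ≤ Cw * ((1/3 - 2 * (1/2^(l+2))) * C2) := by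
    have hstep := Finset.sum_le_sum
      (s := (powersetCard w X).filter (fun Z => ¬ (1/2^(l+2) < EpA p (bigF l' H Z))))
      (f := fun Z => ((B.filter fun W => Z ⊆ W).card : ℝ))
      (g := fun _ => (1/3 - 2 * (1/2^(l+2))) * C2)
      (fun Z hZ => by
        have hZ' := Finset.mem_filter.mp hZ
        apply hfib_good Z hZ'.1
        rw [hBadZdef]
        intro hmem
        exact hZ'.2 (Finset.mem_filter.mp hmem).2)
    rw [Finset.sum_const, nsmul_eq_mul] at hstep
    have hcard_le : (((powersetCard w X).filter (fun Z => ¬ (1/2^(l+2) < EpA p (bigF l' H Z)))).card : ℝ) ≤ Cw := by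
      rw [hCw, ← Finset.card_powersetCard w X]
      exact_mod_cast Finset.card_le_card hGoodZsub
    have hnn : (0:ℝ) ≤ (1/3 - 2 * (1/2^(l+2))) * C2 := by
      apply mul_nonneg _ hC20
      linarith
    calc ∑ Z ∈ (powersetCard w X).filter (fun Z => ¬ (1/2^(l+2) < EpA p (bigF l' H Z))),
          ((B.filter fun W => Z ⊆ W).card : ℝ)
        ≤ (((powersetCard w X).filter (fun Z => ¬ (1/2^(l+2) < EpA p (bigF l' H Z)))).card : ℝ)
            * ((1/3 - 2 * (1/2^(l+2))) * C2) := hstep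
      _ ≤ Cw * ((1/3 - 2 * (1/2^(l+2))) * C2) := mul_le_mul_of_nonneg_right hcard_le hnn
  have hBbound : (B.card : ℝ) * (m.choose w : ℝ) ≤ (1/3 - 1/2^(l+2)) * (Cw * C2) := by
    have hcast : (B.card : ℝ) * (m.choose w : ℝ)
        = ∑ Z ∈ powersetCard w X, ((B.filter fun W => Z ⊆ W).card : ℝ) := by
      rw [← Nat.cast_sum]
      rw [hdouble]
      push_cast
      ring
    rw [hcast, ← hsum_split]
    have : (BadZ.card : ℝ) * C2 ≤ (1/2^(l+2)) * Cw * C2 :=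
      mul_le_mul_of_nonneg_right (by rw [hCw]; exact hBadcard) hC20
    have hBadZsum : ∑ Z ∈ (powersetCard w X).filter (fun Z => (1/2^(l+2) < EpA p (bigF l' H Z))),
        ((B.filter fun W => Z ⊆ W).card : ℝ) ≤ (1/2^(l+2)) * Cw * C2 := by
      calc ∑ Z ∈ (powersetCard w X).filter (fun Z => (1/2^(l+2) < EpA p (bigF l' H Z))),
            ((B.filter fun W => Z ⊆ W).card : ℝ)
          = ∑ Z ∈ BadZ, ((B.filter fun W => Z ⊆ W).card : ℝ) := by rw [hBadZdef]
        _ ≤ (BadZ.card : ℝ) * C2 := hsum1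
        _ ≤ (1/2^(l+2)) * Cw * C2 := this
    have := hsum2
    nlinarith
  have hidentity : Cw * C2 = (X.card.choose m : ℝ) * (m.choose w : ℝ) := by
    rw [hCw, hC2]
    have := Nat.choose_mul (n := X.card) (k := m) (hsk := hwm')
    rw [← Nat.cast_mul, ← Nat.cast_mul]
    exact_mod_cast this.symm
  have hchoosewpos : (0:ℝ) < (m.choose w : ℝ) := by
    exact_mod_cast Nat.choose_pos hwm'
  have hBfinal : (B.card : ℝ) ≤ (1/3 - 1/2^(l+2)) * (X.card.choose m : ℝ) := by
    rw [hidentity] at hBbound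
    have h := hBbound
    have : (B.card : ℝ) * (m.choose w : ℝ)
        ≤ ((1/3 - 1/2^(l+2)) * (X.card.choose m : ℝ)) * (m.choose w : ℝ) := by
      calc (B.card : ℝ) * (m.choose w : ℝ) ≤ (1/3 - 1/2^(l+2)) * ((X.card.choose m : ℝ) * (m.choose w : ℝ)) := h
        _ = ((1/3 - 1/2^(l+2)) * (X.card.choose m : ℝ)) * (m.choose w : ℝ) := by ring
    exact le_of_mul_le_mul_right this hchoosewpos
  -- conclude
  have hfinal_split := Finset.card_filter_add_card_filter_not
    (s := powersetCard m X) (p := fun W => ∃ S ∈ H, S ⊆ W)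
  have hfinal_cast : (((powersetCard m X).filter fun W => ∃ S ∈ H, S ⊆ W).card : ℝ) + (B.card : ℝ)
      = (X.card.choose m : ℝ) := by
    rw [hBdef, ← Finset.card_powersetCard m X]
    exact_mod_cast hfinal_split
  linarith

end PPaux

/-- Park–Pham covering theorem, inductive form. -/
theorem park_pham_inductive :
    ∃ L : ℝ, 0 < L ∧
      ∀ (N l : ℕ), l ≤ N → ∀ p : ℝ, 0 < p → p ≤ 1 →
        ∀ H : Finset (Finset (Fin N)), (∀ S ∈ H, S.card ≤ l) →
          coverCost N p H ≥ 1 / 2 - 1 / 2 ^ (l + 2) →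
          ∀ m : ℕ, m = ⌊L * p * N * Real.logb 2 (l + 1)⌋₊ → m ≤ N →
            ((level N m ∩ cl N H).card : ℝ) ≥
              (2 / 3 + 1 / 2 ^ (l + 2)) * (N.choose m : ℝ) := by
  refine ⟨2000, by norm_num, ?_⟩
  intro N l hlN p hp hp1 H hbound hcost m hmdef hmN
  have hNcard : (Finset.univ : Finset (Fin N)).card = N := by simp
  have hcost' : costA p H ≥ 1/2 - 1/2^(l+2) := hcost
  have hm1 : 2000 * p * ((Finset.univ : Finset (Fin N)).card : ℝ) * Real.logb 2 (l+1)
      < (m:ℝ) + 1 := by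
    rw [hNcard, hmdef]
    exact Nat.lt_floor_add_one _
  have hm2 : m ≤ (Finset.univ : Finset (Fin N)).card := by rw [hNcard]; exact hmN
  have key := auxPP l Finset.univ p hp hp1 H (fun S _ => Finset.subset_univ S) hbound
    hcost' m hm1 hm2
  rw [hNcard] at key
  have hset : level N m ∩ cl N H
      = (powersetCard m Finset.univ).filter (fun W => ∃ S ∈ H, S ⊆ W) := by
    ext T
    simp only [level, cl, Finset.mem_inter, Finset.mem_filter, Finset.mem_univ, true_and]
  rw [hset]
  exact key
end

section
/- Park–Pham covering theorem: There is a constant L such that for every integer l ≥ 1, every p ∈ (0,1], every finite set X of size N, and every l-bounded family H of subsets of X with cover cost f(H) ≥ 1/2, the upward closure ⟨H⟩ contains at least 2/3 of the level L_{m}, where m = ⌊L p N log₂(l+1)⌋ ≤ N. -/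
open Finset
open scoped Classical

namespace ParkPham

variable {N : ℕ}

/-! ### Basics about `Ep` and `coverCost` -/

lemma Ep_nonneg {p : ℝ} (hp : 0 ≤ p) (G : Finset (Finset (Fin N))) : 0 ≤ Ep N p G :=
  Finset.sum_nonneg fun _ _ => pow_nonneg hp _

lemma costSet_nonempty (p : ℝ) (H : Finset (Finset (Fin N))) :
    {x : ℝ | ∃ G : Finset (Finset (Fin N)), Covers N G H ∧ x = Ep N p G}.Nonempty :=
  ⟨Ep N p {∅}, {∅}, fun S _ => ⟨∅, mem_singleton_self _, empty_subset _⟩, rfl⟩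

lemma costSet_bddBelow {p : ℝ} (hp : 0 ≤ p) (H : Finset (Finset (Fin N))) :
    BddBelow {x : ℝ | ∃ G : Finset (Finset (Fin N)), Covers N G H ∧ x = Ep N p G} := by
  refine ⟨0, ?_⟩
  rintro x ⟨G, -, rfl⟩
  exact Ep_nonneg hp G

lemma coverCost_le_Ep {p : ℝ} (hp : 0 ≤ p) {H G : Finset (Finset (Fin N))}
    (h : Covers N G H) : coverCost N p H ≤ Ep N p G :=
  csInf_le (costSet_bddBelow hp H) ⟨G, h, rfl⟩

lemma le_coverCost {p : ℝ} {H : Finset (Finset (Fin N))} {c : ℝ}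
    (h : ∀ G : Finset (Finset (Fin N)), Covers N G H → c ≤ Ep N p G) :
    c ≤ coverCost N p H := by
  refine le_csInf (costSet_nonempty p H) ?_
  rintro x ⟨G, hG, rfl⟩
  exact h G hG

lemma coverCost_nonneg {p : ℝ} (hp : 0 ≤ p) (H : Finset (Finset (Fin N))) :
    0 ≤ coverCost N p H :=
  le_coverCost fun G _ => Ep_nonneg hp G

lemma coverCost_empty_le {p : ℝ} (hp : 0 ≤ p) :
    coverCost N p (∅ : Finset (Finset (Fin N))) ≤ 0 := by
  have h : Covers N (∅ : Finset (Finset (Fin N))) ∅ := fun S hS => absurd hS (notMem_empty S)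
  simpa [Ep] using coverCost_le_Ep hp h

lemma Ep_union_le {p : ℝ} (hp : 0 ≤ p) (A B : Finset (Finset (Fin N))) :
    Ep N p (A ∪ B) ≤ Ep N p A + Ep N p B := by
  have h : ((∑ S ∈ A ∪ B, p ^ S.card) + ∑ S ∈ A ∩ B, p ^ S.card)
      = (∑ S ∈ A, p ^ S.card) + ∑ S ∈ B, p ^ S.card := Finset.sum_union_inter
  have h2 : 0 ≤ ∑ S ∈ A ∩ B, p ^ S.card := Finset.sum_nonneg fun _ _ => pow_nonneg hp _
  simp only [Ep]
  linarith

/-! ### Minimal fragments -/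

/-- The element of `F` contained in `S ∪ W` whose part outside `W` is smallest. -/
noncomputable def minWit (F : Finset (Finset (Fin N))) (W S : Finset (Fin N)) :
    Finset (Fin N) :=
  if h : (F.filter (fun S' => S' ⊆ S ∪ W)).Nonempty then
    Classical.choose (Finset.exists_min_image _ (fun S' => (S' \ W).card) h)
  else ∅

lemma minWit_spec {F : Finset (Finset (Fin N))} {W S : Finset (Fin N)} (hS : S ∈ F) :
    minWit F W S ∈ F ∧ minWit F W S ⊆ S ∪ W ∧
      ∀ S'' ∈ F, S'' ⊆ S ∪ W → (minWit F W S \ W).card ≤ (S'' \ W).card := by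
  have hne : (F.filter (fun S' => S' ⊆ S ∪ W)).Nonempty :=
    ⟨S, mem_filter.2 ⟨hS, subset_union_left⟩⟩
  rw [minWit, dif_pos hne]
  obtain ⟨h1, h2⟩ := Classical.choose_spec
    (Finset.exists_min_image (F.filter (fun S' => S' ⊆ S ∪ W))
      (fun S' => (S' \ W).card) hne)
  rw [mem_filter] at h1
  exact ⟨h1.1, h1.2, fun S'' hS'' hsub => h2 S'' (mem_filter.2 ⟨hS'', hsub⟩)⟩

/-- Minimal fragment of `S` relative to `W`. -/
noncomputable def frag (F : Finset (Finset (Fin N))) (W S : Finset (Fin N)) :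
    Finset (Fin N) :=
  minWit F W S \ W

/-- `S` is bad: its minimal fragment has more than `r/2` elements. -/
def bad (r : ℕ) (F : Finset (Finset (Fin N))) (W S : Finset (Fin N)) : Prop :=
  r < 2 * (frag F W S).card

/-- The cover made of the (large) fragments of bad sets. -/
noncomputable def gbad (r : ℕ) (F : Finset (Finset (Fin N))) (W : Finset (Fin N)) :
    Finset (Finset (Fin N)) :=
  (F.filter (fun S => bad r F W S)).image (frag F W)

/-- The next-round family: fragments of good sets. -/
noncomputable def fnext (r : ℕ) (F : Finset (Finset (Fin N))) (W : Finset (Fin N)) :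
    Finset (Finset (Fin N)) :=
  (F.filter (fun S => ¬ bad r F W S)).image (frag F W)

lemma frag_subset {F : Finset (Finset (Fin N))} {W S : Finset (Fin N)} (hS : S ∈ F) :
    frag F W S ⊆ S := by
  intro x hx
  rw [frag, mem_sdiff] at hx
  rcases mem_union.1 ((minWit_spec (W := W) hS).2.1 hx.1) with h | h
  · exact h
  · exact absurd h hx.2

lemma minWit_subset_union_frag (F : Finset (Finset (Fin N))) (W S : Finset (Fin N)) :
    minWit F W S ⊆ W ∪ frag F W S := by
  intro x hx
  by_cases hxW : x ∈ W
  · exact mem_union_left _ hxW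
  · exact mem_union_right _ (mem_sdiff.2 ⟨hx, hxW⟩)

lemma frag_disjoint (F : Finset (Finset (Fin N))) (W S : Finset (Fin N)) :
    Disjoint (frag F W S) W :=
  sdiff_disjoint

/-- The cost inequality driving the iteration. -/
lemma coverCost_fnext {p : ℝ} (hp : 0 ≤ p) (r : ℕ) (F : Finset (Finset (Fin N)))
    (W : Finset (Fin N)) :
    coverCost N p F - Ep N p (gbad r F W) ≤ coverCost N p (fnext r F W) := by
  apply le_coverCost
  intro G' hG'
  have hcov : Covers N (gbad r F W ∪ G') F := by
    intro S hS
    by_cases hb : bad r F W S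
    · exact ⟨frag F W S, mem_union_left _ (mem_image_of_mem _ (mem_filter.2 ⟨hS, hb⟩)),
        frag_subset hS⟩
    · obtain ⟨T, hT, hTsub⟩ := hG' (frag F W S) (mem_image_of_mem _ (mem_filter.2 ⟨hS, hb⟩))
      exact ⟨T, mem_union_right _ hT, hTsub.trans (frag_subset hS)⟩
  have h1 := coverCost_le_Ep hp hcov
  have h2 := Ep_union_le hp (gbad r F W) G'
  linarith

/-! ### The counting lemma -/

/-- A canonical witness for each possible union `Y = W ∪ T`. -/
noncomputable def wit (r w : ℕ) (F : Finset (Finset (Fin N))) (X' : Finset (Fin N))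
    (Y : Finset (Fin N)) : Finset (Fin N) :=
  if h : ∃ W S : Finset (Fin N),
      W ∈ X'.powersetCard w ∧ S ∈ F ∧ bad r F W S ∧ W ∪ frag F W S = Y then
    minWit F h.choose h.choose_spec.choose
  else ∅

lemma wit_spec {r w : ℕ} {F : Finset (Finset (Fin N))} {X' Y : Finset (Fin N)}
    (h : ∃ W S : Finset (Fin N),
      W ∈ X'.powersetCard w ∧ S ∈ F ∧ bad r F W S ∧ W ∪ frag F W S = Y) :
    wit r w F X' Y ∈ F ∧ wit r w F X' Y ⊆ Y := by
  rw [wit, dif_pos h]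
  obtain ⟨hW, hS, hbad, hY⟩ := h.choose_spec.choose_spec
  obtain ⟨hmem, hsub, hmin⟩ := minWit_spec (W := h.choose) hS
  refine ⟨hmem, ?_⟩
  intro x hx
  rw [← hY]
  exact minWit_subset_union_frag _ _ _ hx

lemma wit_card_le {r w : ℕ} {F : Finset (Finset (Fin N))} {X' Y : Finset (Fin N)}
    (hFr : ∀ S ∈ F, S.card ≤ r) : (wit r w F X' Y).card ≤ r := by
  by_cases h : ∃ W S : Finset (Fin N),
      W ∈ X'.powersetCard w ∧ S ∈ F ∧ bad r F W S ∧ W ∪ frag F W S = Y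
  · exact hFr _ (wit_spec h).1
  · rw [wit, dif_neg h]
    simp

/-- Key minimality property: every fragment mapping to `Y` is contained in the
canonical witness of `Y`. -/
lemma frag_subset_wit {r w : ℕ} {F : Finset (Finset (Fin N))} {X' : Finset (Fin N)}
    {W S : Finset (Fin N)} (hW : W ∈ X'.powersetCard w) (hS : S ∈ F)
    (hbad : bad r F W S) :
    frag F W S ⊆ wit r w F X' (W ∪ frag F W S) := by
  have h : ∃ W' S' : Finset (Fin N),
      W' ∈ X'.powersetCard w ∧ S' ∈ F ∧ bad r F W' S' ∧
        W' ∪ frag F W' S' = W ∪ frag F W S :=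
    ⟨W, S, hW, hS, hbad, rfl⟩
  obtain ⟨hVF, hVY⟩ := wit_spec h
  have hVSW : wit r w F X' (W ∪ frag F W S) ⊆ S ∪ W := by
    intro x hx
    rcases mem_union.1 (hVY hx) with h1 | h1
    · exact mem_union_right _ h1
    · exact mem_union_left _ (frag_subset hS h1)
  have hmin := (minWit_spec (W := W) hS).2.2 _ hVF hVSW
  have hsub : wit r w F X' (W ∪ frag F W S) \ W ⊆ frag F W S := by
    intro x hx
    rw [mem_sdiff] at hx
    rcases mem_union.1 (hVY hx.1) with h1 | h1
    · exact absurd h1 hx.2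
    · exact h1
  have heq : wit r w F X' (W ∪ frag F W S) \ W = frag F W S :=
    Finset.eq_of_subset_of_card_le hsub hmin
  intro x hx
  rw [← heq] at hx
  exact (mem_sdiff.1 hx).1

lemma gbad_mem_card {r : ℕ} {F : Finset (Finset (Fin N))} {W T : Finset (Fin N)}
    (hFr : ∀ S ∈ F, S.card ≤ r) (hT : T ∈ gbad r F W) :
    T.card ∈ Icc (r / 2 + 1) r := by
  obtain ⟨S, hS, rfl⟩ := mem_image.1 hT
  rw [mem_filter] at hS
  have h1 : r < 2 * (frag F W S).card := hS.2
  have h2 : (frag F W S).card ≤ r := by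
    refine le_trans (Finset.card_le_card ?_) (hFr _ (minWit_spec (W := W) hS.1).1)
    exact sdiff_subset
  rw [mem_Icc]
  omega

lemma gbad_subset_ground {r : ℕ} {F : Finset (Finset (Fin N))} {X' W T : Finset (Fin N)}
    (hFX : ∀ S ∈ F, S ⊆ X') (hT : T ∈ gbad r F W) : T ⊆ X' := by
  obtain ⟨S, hS, rfl⟩ := mem_image.1 hT
  rw [mem_filter] at hS
  exact (frag_subset hS.1).trans (hFX _ hS.1)

/-- Fiber counting: the number of pairs `(W, T)` with `T` a bad fragment of size `k`. -/
lemma count_pairs (r w k : ℕ) (F : Finset (Finset (Fin N))) (X' : Finset (Fin N))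
    (hFX : ∀ S ∈ F, S ⊆ X') (hFr : ∀ S ∈ F, S.card ≤ r) :
    ∑ W ∈ X'.powersetCard w, ((gbad r F W).filter (fun T => T.card = k)).card
      ≤ (X'.card.choose (w + k)) * (r.choose k) := by
  rw [← Finset.card_sigma]
  have hcard := Finset.card_le_card_of_injOn
    (s := (X'.powersetCard w).sigma (fun W => (gbad r F W).filter (fun T => T.card = k)))
    (t := (X'.powersetCard (w + k)).sigma (fun Y => (wit r w F X' Y).powersetCard k))
    (fun q => ⟨q.1 ∪ q.2, q.2⟩) ?_ ?_
  · refine hcard.trans ?_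
    rw [Finset.card_sigma]
    calc ∑ Y ∈ X'.powersetCard (w + k), ((wit r w F X' Y).powersetCard k).card
        ≤ ∑ _Y ∈ X'.powersetCard (w + k), r.choose k := by
          refine Finset.sum_le_sum fun Y _ => ?_
          rw [Finset.card_powersetCard]
          exact Nat.choose_le_choose k (wit_card_le hFr)
      _ = (X'.card.choose (w + k)) * (r.choose k) := by
          rw [Finset.sum_const, smul_eq_mul, Finset.card_powersetCard]
  · rintro ⟨W, T⟩ hq
    rw [Finset.mem_coe, Finset.mem_sigma] at hq
    obtain ⟨hW, hT⟩ := hq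
    dsimp only at hW hT ⊢
    rw [mem_filter] at hT
    obtain ⟨hTg, hTk⟩ := hT
    obtain ⟨S, hS, hfrag⟩ := mem_image.1 hTg
    rw [mem_filter] at hS
    have hdisj : Disjoint T W := by
      rw [← hfrag]; exact frag_disjoint F W S
    rw [Finset.mem_coe, Finset.mem_sigma]
    dsimp only
    constructor
    · rw [mem_powersetCard]
      refine ⟨union_subset (mem_powersetCard.1 hW).1 (gbad_subset_ground hFX hTg), ?_⟩
      rw [card_union_of_disjoint hdisj.symm, (mem_powersetCard.1 hW).2, hTk]
    · rw [mem_powersetCard]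
      refine ⟨?_, hTk⟩
      rw [← hfrag]
      exact frag_subset_wit hW hS.1 hS.2
  · rintro ⟨W1, T1⟩ h1 ⟨W2, T2⟩ h2 heq
    simp only [Finset.mem_coe, Finset.mem_sigma, mem_filter] at h1 h2
    have hTT : T1 = T2 := eq_of_heq (congr_arg_heq Sigma.snd heq)
    have hYY : W1 ∪ T1 = W2 ∪ T2 := congrArg Sigma.fst heq
    obtain ⟨S1, hS1, hfrag1⟩ := mem_image.1 h1.2.1
    obtain ⟨S2, hS2, hfrag2⟩ := mem_image.1 h2.2.1
    have hd1 : Disjoint W1 T1 := by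
      rw [← hfrag1]; exact (frag_disjoint F W1 S1).symm
    have hd2 : Disjoint W2 T2 := by
      rw [← hfrag2]; exact (frag_disjoint F W2 S2).symm
    subst hTT
    have hWW : W1 = W2 := by
      have e1 : (W1 ∪ T1) \ T1 = W1 := Finset.union_sdiff_cancel_right hd1
      have e2 : (W2 ∪ T1) \ T1 = W2 := Finset.union_sdiff_cancel_right hd2
      rw [← e1, ← e2, hYY]
    subst hWW; rfl

/-- Ratio bound for binomial coefficients. -/
lemma ratio_pow {p : ℝ} (hp : 0 < p) {w : ℕ} (hw : 1 ≤ w) {n : ℕ}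
    (hratio : 4096 * p * n ≤ w) (k : ℕ) :
    (p : ℝ) ^ k * (n.choose (w + k)) ≤ (1 / 4096 : ℝ) ^ k * (n.choose w) := by
  induction k with
  | zero => simp
  | succ k ih =>
    have hw0 : (0 : ℝ) < w := by exact_mod_cast hw
    have hkey : (n.choose (w + k + 1) : ℝ) * ((w + k : ℕ) + 1) =
        (n.choose (w + k) : ℝ) * ((n - (w + k) : ℕ) : ℝ) := by
      exact_mod_cast Nat.choose_succ_right_eq n (w + k)
    have hub : ((n - (w + k) : ℕ) : ℝ) ≤ (n : ℝ) := by
      exact_mod_cast Nat.sub_le n (w + k)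
    have hC0 : (0 : ℝ) ≤ (n.choose (w + k) : ℝ) := by positivity
    have hC1 : (0 : ℝ) ≤ (n.choose (w + k + 1) : ℝ) := by positivity
    have hpn : p * n ≤ w / 4096 := by linarith
    -- p * C1 * w ≤ C0 * w / 4096
    have hstep : p * (n.choose (w + k + 1) : ℝ) * w ≤ (n.choose (w + k) : ℝ) * w / 4096 := by
      have hq1 : (0:ℝ) ≤ p * (n.choose (w + k + 1) : ℝ) := by positivity
      have hwk1 : (w : ℝ) ≤ ((w + k : ℕ) : ℝ) + 1 := by push_cast; linarith
      have h1 : (p * (n.choose (w + k + 1) : ℝ)) * (w : ℝ)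
          ≤ (p * (n.choose (w + k + 1) : ℝ)) * (((w + k : ℕ) : ℝ) + 1) :=
        mul_le_mul_of_nonneg_left hwk1 hq1
      have h1' : (p * (n.choose (w + k + 1) : ℝ)) * (((w + k : ℕ) : ℝ) + 1)
          = p * ((n.choose (w + k + 1) : ℝ) * (((w + k : ℕ) : ℝ) + 1)) := by ring
      have h2 : p * ((n.choose (w + k) : ℝ) * ((n - (w + k) : ℕ) : ℝ))
          ≤ p * ((n.choose (w + k) : ℝ) * n) :=
        mul_le_mul_of_nonneg_left (mul_le_mul_of_nonneg_left hub hC0) hp.le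
      have h4 : (p * (n : ℝ)) * (n.choose (w + k) : ℝ)
          ≤ ((w : ℝ) / 4096) * (n.choose (w + k) : ℝ) :=
        mul_le_mul_of_nonneg_right hpn hC0
      rw [h1', hkey] at h1
      have h2' : p * ((n.choose (w + k) : ℝ) * (n : ℝ))
          = (p * (n : ℝ)) * (n.choose (w + k) : ℝ) := by ring
      calc p * (n.choose (w + k + 1) : ℝ) * w
          ≤ p * ((n.choose (w + k) : ℝ) * ((n - (w + k) : ℕ) : ℝ)) := h1
        _ ≤ p * ((n.choose (w + k) : ℝ) * (n : ℝ)) := h2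
        _ = (p * (n : ℝ)) * (n.choose (w + k) : ℝ) := h2'
        _ ≤ ((w : ℝ) / 4096) * (n.choose (w + k) : ℝ) := h4
        _ = (n.choose (w + k) : ℝ) * w / 4096 := by ring
    have hPC1 : p * (n.choose (w + k + 1) : ℝ) ≤ (n.choose (w + k) : ℝ) / 4096 := by
      have := (mul_le_mul_iff_of_pos_right hw0).1 (by linarith [hstep] :
        (p * (n.choose (w + k + 1) : ℝ)) * w ≤ ((n.choose (w + k) : ℝ) / 4096) * w)
      exact this
    have hpk : (0 : ℝ) ≤ p ^ k := by positivity
    calc (p : ℝ) ^ (k + 1) * (n.choose (w + (k + 1)) : ℝ)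
        = p ^ k * (p * (n.choose (w + k + 1) : ℝ)) := by
          rw [show w + (k + 1) = w + k + 1 from rfl]; ring
      _ ≤ p ^ k * ((n.choose (w + k) : ℝ) / 4096) := by
          exact mul_le_mul_of_nonneg_left hPC1 hpk
      _ = (1 / 4096 : ℝ) * (p ^ k * (n.choose (w + k) : ℝ)) := by ring
      _ ≤ (1 / 4096 : ℝ) * ((1 / 4096 : ℝ) ^ k * (n.choose w : ℝ)) := by
          apply mul_le_mul_of_nonneg_left ih (by norm_num)
      _ = (1 / 4096 : ℝ) ^ (k + 1) * (n.choose w : ℝ) := by ring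

/-- Per-round weight function. -/
noncomputable def gammaF (r : ℕ) : ℝ :=
  ∑ k ∈ Icc (r / 2 + 1) r, (r.choose k : ℝ) * (1 / 4096 : ℝ) ^ k

lemma gammaF_nonneg (r : ℕ) : 0 ≤ gammaF r :=
  Finset.sum_nonneg fun k _ => by positivity

/-- The expected cost of the bad cover in one round. -/
lemma count_gbad {p : ℝ} (hp : 0 < p) {w r : ℕ} (hw : 1 ≤ w) {X' : Finset (Fin N)}
    {F : Finset (Finset (Fin N))} (hFX : ∀ S ∈ F, S ⊆ X') (hFr : ∀ S ∈ F, S.card ≤ r)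
    (hratio : 4096 * p * X'.card ≤ w) :
    ∑ W ∈ X'.powersetCard w, Ep N p (gbad r F W) ≤ gammaF r * (X'.card.choose w) := by
  have hEp : ∀ W : Finset (Fin N), Ep N p (gbad r F W)
      = ∑ k ∈ Icc (r / 2 + 1) r,
          (p : ℝ) ^ k * (((gbad r F W).filter (fun T => T.card = k)).card : ℝ) := by
    intro W
    rw [Ep, ← Finset.sum_fiberwise_of_maps_to (g := Finset.card)
      (fun T hT => gbad_mem_card hFr hT) (fun T => (p : ℝ) ^ T.card)]
    refine Finset.sum_congr rfl fun k _ => ?_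
    rw [Finset.sum_congr rfl (fun T hT => by rw [(Finset.mem_filter.1 hT).2]),
      Finset.sum_const, nsmul_eq_mul, mul_comm]
  calc ∑ W ∈ X'.powersetCard w, Ep N p (gbad r F W)
      = ∑ k ∈ Icc (r / 2 + 1) r, ∑ W ∈ X'.powersetCard w,
          (p : ℝ) ^ k * (((gbad r F W).filter (fun T => T.card = k)).card : ℝ) := by
        rw [Finset.sum_comm]
        exact Finset.sum_congr rfl fun W _ => hEp W
    _ = ∑ k ∈ Icc (r / 2 + 1) r, (p : ℝ) ^ k * ((∑ W ∈ X'.powersetCard w,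
          (((gbad r F W).filter (fun T => T.card = k)).card : ℕ) : ℕ) : ℝ) := by
        refine Finset.sum_congr rfl fun k _ => ?_
        rw [← Finset.mul_sum]
        push_cast
        ring
    _ ≤ ∑ k ∈ Icc (r / 2 + 1) r, (p : ℝ) ^ k *
          ((X'.card.choose (w + k) * r.choose k : ℕ) : ℝ) := by
        refine Finset.sum_le_sum fun k _ => ?_
        have := count_pairs r w k F X' hFX hFr
        have hpk : (0 : ℝ) ≤ p ^ k := by positivity
        exact mul_le_mul_of_nonneg_left (by exact_mod_cast this) hpk
    _ ≤ ∑ k ∈ Icc (r / 2 + 1) r,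
          ((r.choose k : ℝ) * (1 / 4096 : ℝ) ^ k) * (X'.card.choose w : ℝ) := by
        refine Finset.sum_le_sum fun k _ => ?_
        push_cast
        have h := ratio_pow hp hw hratio k
        have hrk : (0 : ℝ) ≤ (r.choose k : ℝ) := by positivity
        calc (p : ℝ) ^ k * ((X'.card.choose (w + k) : ℝ) * (r.choose k : ℝ))
            = (r.choose k : ℝ) * ((p : ℝ) ^ k * (X'.card.choose (w + k) : ℝ)) := by ring
          _ ≤ (r.choose k : ℝ) * ((1 / 4096 : ℝ) ^ k * (X'.card.choose w : ℝ)) :=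
              mul_le_mul_of_nonneg_left h hrk
          _ = ((r.choose k : ℝ) * (1 / 4096 : ℝ) ^ k) * (X'.card.choose w : ℝ) := by ring
    _ = gammaF r * (X'.card.choose w : ℝ) := by
        rw [gammaF, Finset.sum_mul]

/-! ### Choose identities -/

lemma choose_id (n a b : ℕ) (h : a + b ≤ n) :
    n.choose a * (n - a).choose b = n.choose (a + b) * (a + b).choose a := by
  have ha : a ≤ n := le_trans (Nat.le_add_right a b) h
  have hb : b ≤ n - a := by omega
  have hab : a ≤ a + b := Nat.le_add_right a b
  have h1 := Nat.choose_mul_factorial_mul_factorial ha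
  have h2 := Nat.choose_mul_factorial_mul_factorial hb
  have h3 := Nat.choose_mul_factorial_mul_factorial h
  have h4 := Nat.choose_mul_factorial_mul_factorial hab
  have e1 : a + b - a = b := by omega
  have e2 : n - a - b = n - (a + b) := by omega
  rw [e1] at h4
  apply Nat.eq_of_mul_eq_mul_right
    (show 0 < a.factorial * b.factorial * (n - a - b).factorial by positivity)
  calc n.choose a * (n - a).choose b * (a.factorial * b.factorial * (n - a - b).factorial)
      = (n.choose a * a.factorial) * ((n - a).choose b * b.factorial * (n - a - b).factorial) := by
        ring
    _ = (n.choose a * a.factorial) * (n - a).factorial := by rw [← h2]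
    _ = n.factorial := by rw [← h1]
    _ = n.choose (a + b) * (a + b).factorial * (n - (a + b)).factorial := by rw [h3]
    _ = n.choose (a + b) * ((a + b).choose a * a.factorial * b.factorial)
          * (n - (a + b)).factorial := by rw [h4]
    _ = n.choose (a + b) * (a + b).choose a
          * (a.factorial * b.factorial * (n - a - b).factorial) := by rw [e2]; ring

/-! ### The recursive weight and its numeric bound -/

noncomputable def Gam : ℕ → ℕ → ℝ
  | 0, _ => 0
  | (t + 1), r => gammaF r + Gam t (r / 2)

lemma gammaF_zero : gammaF 0 = 0 := by
  rw [gammaF]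
  simp

lemma gammaF_le (r : ℕ) (hr : 1 ≤ r) :
    gammaF r ≤ (2 : ℝ) ^ r * (1 / 4096 : ℝ) ^ (r / 2 + 1) := by
  have h1 : gammaF r ≤ ∑ k ∈ Icc (r / 2 + 1) r, (r.choose k : ℝ) * (1 / 4096 : ℝ) ^ (r / 2 + 1) := by
    refine Finset.sum_le_sum fun k hk => ?_
    have hk1 := (Finset.mem_Icc.1 hk).1
    have := pow_le_pow_of_le_one (by norm_num : (0:ℝ) ≤ 1/4096) (by norm_num) hk1
    have hrk : (0 : ℝ) ≤ (r.choose k : ℝ) := by positivity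
    exact mul_le_mul_of_nonneg_left this hrk
  have h2 : ∑ k ∈ Icc (r / 2 + 1) r, (r.choose k : ℝ) ≤ (2 : ℝ) ^ r := by
    have hsub : Icc (r / 2 + 1) r ⊆ Finset.range (r + 1) := by
      intro k hk
      rw [Finset.mem_range]
      exact Nat.lt_succ_of_le (Finset.mem_Icc.1 hk).2
    calc ∑ k ∈ Icc (r / 2 + 1) r, (r.choose k : ℝ)
        ≤ ∑ k ∈ Finset.range (r + 1), (r.choose k : ℝ) :=
          Finset.sum_le_sum_of_subset_of_nonneg hsub (fun k _ _ => by positivity)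
      _ = (2 : ℝ) ^ r := by
          rw [← Nat.cast_sum]
          rw [Nat.sum_range_choose]
          push_cast
          ring
  calc gammaF r ≤ (∑ k ∈ Icc (r / 2 + 1) r, (r.choose k : ℝ)) * (1 / 4096 : ℝ) ^ (r / 2 + 1) := by
        rw [Finset.sum_mul] at *
        exact h1
    _ ≤ (2 : ℝ) ^ r * (1 / 4096 : ℝ) ^ (r / 2 + 1) := by
        have : (0:ℝ) ≤ (1 / 4096 : ℝ) ^ (r / 2 + 1) := by positivity
        exact mul_le_mul_of_nonneg_right h2 this

lemma gammaF_key (r : ℕ) :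
    gammaF r ≤ 1 / 16 * ((1 / 32 : ℝ) ^ (r / 2) - (1 / 32 : ℝ) ^ r) := by
  rcases Nat.eq_zero_or_pos r with hr | hr
  · subst hr
    rw [gammaF_zero]
    norm_num
  · set j := r / 2 with hj
    have hrj1 : j + 1 ≤ r := by omega
    have hrj2 : r ≤ 2 * j + 1 := by omega
    have hA : gammaF r ≤ (2 : ℝ) ^ r * (1 / 4096 : ℝ) ^ (j + 1) := gammaF_le r hr
    have hB : (2 : ℝ) ^ r ≤ (2 : ℝ) ^ (2 * j + 1) :=
      pow_le_pow_right₀ (by norm_num) hrj2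
    have hC : (2 : ℝ) ^ (2 * j + 1) * (1 / 4096 : ℝ) ^ (j + 1)
        = (1 / 2048 : ℝ) * (1 / 1024 : ℝ) ^ j := by
      have e1 : (2:ℝ) ^ (2 * j + 1) = 2 * (4:ℝ) ^ j := by
        rw [pow_succ, pow_mul]
        norm_num [mul_comm]
      have e2 : (1/4096:ℝ) ^ (j + 1) = (1/4096:ℝ) ^ j * (1/4096) := pow_succ _ _
      have e3 : (4:ℝ) ^ j * (1/4096:ℝ) ^ j = (1/1024:ℝ) ^ j := by
        rw [← mul_pow]
        norm_num
      calc (2:ℝ) ^ (2 * j + 1) * (1 / 4096 : ℝ) ^ (j + 1)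
          = (2 * (4:ℝ) ^ j) * ((1/4096:ℝ) ^ j * (1/4096)) := by rw [e1, e2]
        _ = (1 / 2048 : ℝ) * ((4:ℝ) ^ j * (1/4096:ℝ) ^ j) := by ring
        _ = (1 / 2048 : ℝ) * (1 / 1024 : ℝ) ^ j := by rw [e3]
    have hD : (1 / 2048 : ℝ) * (1 / 1024 : ℝ) ^ j ≤ (31 / 512 : ℝ) * (1 / 32 : ℝ) ^ j := by
      have h1 : (1 / 1024 : ℝ) ^ j ≤ (1 / 32 : ℝ) ^ j :=
        pow_le_pow_left₀ (by norm_num) (by norm_num) j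
      have h2 : (0:ℝ) ≤ (1/32:ℝ)^j := by positivity
      nlinarith
    have hE : (31 / 512 : ℝ) * (1 / 32 : ℝ) ^ j
        ≤ 1 / 16 * ((1 / 32 : ℝ) ^ j - (1 / 32 : ℝ) ^ r) := by
      have h1 : (1 / 32 : ℝ) ^ r ≤ (1 / 32 : ℝ) ^ (j + 1) :=
        pow_le_pow_of_le_one (by norm_num) (by norm_num) hrj1
      have h2 : (1 / 32 : ℝ) ^ (j + 1) = (1 / 32 : ℝ) * (1 / 32 : ℝ) ^ j := by
        rw [pow_succ]; ring
      nlinarith [pow_nonneg (show (0:ℝ) ≤ 1/32 by norm_num) j]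
    have hpow : (0:ℝ) ≤ (1 / 4096 : ℝ) ^ (j + 1) := by positivity
    calc gammaF r ≤ (2 : ℝ) ^ r * (1 / 4096 : ℝ) ^ (j + 1) := hA
      _ ≤ (2 : ℝ) ^ (2 * j + 1) * (1 / 4096 : ℝ) ^ (j + 1) :=
          mul_le_mul_of_nonneg_right hB hpow
      _ = (1 / 2048 : ℝ) * (1 / 1024 : ℝ) ^ j := hC
      _ ≤ (31 / 512 : ℝ) * (1 / 32 : ℝ) ^ j := hD
      _ ≤ 1 / 16 * ((1 / 32 : ℝ) ^ j - (1 / 32 : ℝ) ^ r) := hE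

lemma Gam_le (t : ℕ) : ∀ r : ℕ, Gam t r ≤ 1 / 16 * (1 - (1 / 32 : ℝ) ^ r) := by
  induction t with
  | zero =>
    intro r
    have : (1 / 32 : ℝ) ^ r ≤ 1 := pow_le_one₀ (by norm_num) (by norm_num)
    simp only [Gam]
    linarith
  | succ t ih =>
    intro r
    have h1 := gammaF_key r
    have h2 := ih (r / 2)
    have h3 : (1 / 32 : ℝ) ^ (r / 2) ≤ 1 := pow_le_one₀ (by norm_num) (by norm_num)
    simp only [Gam]
    linarith

lemma Gam_nonneg (t : ℕ) : ∀ r : ℕ, 0 ≤ Gam t r := by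
  induction t with
  | zero => intro r; simp [Gam]
  | succ t ih => intro r; simp only [Gam]; linarith [gammaF_nonneg r, ih (r / 2)]

/-! ### Main induction -/

lemma main_claim {p : ℝ} (hp : 0 < p) {w : ℕ} (hw : 1 ≤ w) :
    ∀ (t r : ℕ) (X' : Finset (Fin N)) (F : Finset (Finset (Fin N))) (θ : ℝ),
      (∀ S ∈ F, S ⊆ X') → (∀ S ∈ F, S.card ≤ r) → r < 2 ^ t → t * w ≤ X'.card →
      4096 * p * X'.card ≤ w → θ ≤ coverCost N p F → θ ≤ 1 / 2 →
      (((X'.powersetCard (t * w)).filter (fun A => ¬ ∃ R ∈ F, R ⊆ A)).card : ℝ)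
        ≤ (2 * Gam t r + 1 - 2 * θ) * (X'.card.choose (t * w)) := by
  intro t
  induction t with
  | zero =>
    intro r X' F θ hFX hFr hr htw hratio hθ hθ2
    have hr0 : r = 0 := by simpa using hr
    subst hr0
    rw [Nat.zero_mul] at htw ⊢
    rw [Finset.powersetCard_zero]
    have hGam0 : Gam 0 0 = 0 := rfl
    rw [hGam0, Nat.choose_zero_right]
    by_cases h0 : (∅ : Finset (Fin N)) ∈ F
    · have hfe : ({∅} : Finset (Finset (Fin N))).filter (fun A => ¬ ∃ R ∈ F, R ⊆ A) = ∅ := by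
        rw [Finset.filter_eq_empty_iff]
        intro A hA
        rw [Finset.mem_singleton] at hA
        subst hA
        rw [not_not]
        exact ⟨∅, h0, subset_refl _⟩
      rw [hfe, Finset.card_empty]
      push_cast
      linarith
    · have hF : F = ∅ := by
        rw [Finset.eq_empty_iff_forall_notMem]
        intro S hS
        have := hFr S hS
        have hSe : S = ∅ := Finset.card_eq_zero.1 (Nat.le_zero.1 this)
        exact h0 (hSe ▸ hS)
      have hθ0 : θ ≤ 0 := le_trans hθ (hF ▸ coverCost_empty_le hp.le)
      have hle : (({∅} : Finset (Finset (Fin N))).filter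
          (fun A => ¬ ∃ R ∈ F, R ⊆ A)).card ≤ 1 := by
        refine le_trans (Finset.card_filter_le _ _) (by simp)
      have hleR : ((({∅} : Finset (Finset (Fin N))).filter
          (fun A => ¬ ∃ R ∈ F, R ⊆ A)).card : ℝ) ≤ 1 := by exact_mod_cast hle
      push_cast
      linarith
  | succ t ih =>
    intro r X' F θ hFX hFr hr htw hratio hθ hθ2
    have hmulsucc : (t + 1) * w = t * w + w := by ring
    have hw_le : w ≤ X'.card := by omega
    -- Step 1: pair counting
    have step1 : (((X'.powersetCard ((t + 1) * w)).filter
          (fun A => ¬ ∃ R ∈ F, R ⊆ A)).card) * (((t + 1) * w).choose w)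
        ≤ ∑ W ∈ X'.powersetCard w,
            (((X' \ W).powersetCard (t * w)).filter
              (fun A => ¬ ∃ R ∈ fnext r F W, R ⊆ A)).card := by
      rw [← Finset.card_sigma]
      have lhs_eq : (((X'.powersetCard ((t + 1) * w)).filter
            (fun A => ¬ ∃ R ∈ F, R ⊆ A)).card) * (((t + 1) * w).choose w)
          = (((X'.powersetCard ((t + 1) * w)).filter (fun A => ¬ ∃ R ∈ F, R ⊆ A)).sigma
              (fun A => A.powersetCard w)).card := by
        rw [Finset.card_sigma]
        rw [Finset.sum_congr rfl (fun A hA => by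
          rw [Finset.card_powersetCard,
            (mem_powersetCard.1 (Finset.mem_filter.1 hA).1).2])]
        rw [Finset.sum_const, smul_eq_mul]
      rw [lhs_eq]
      apply Finset.card_le_card_of_injOn (fun q => ⟨q.2, q.1 \ q.2⟩)
      · rintro ⟨A, W⟩ hq
        rw [Finset.mem_coe, Finset.mem_sigma] at hq
        obtain ⟨hA, hWA⟩ := hq
        rw [mem_filter] at hA
        obtain ⟨hAmem, hAbad⟩ := hA
        obtain ⟨hAX, hAcard⟩ := mem_powersetCard.1 hAmem
        obtain ⟨hWsub, hWcard⟩ := mem_powersetCard.1 hWA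
        rw [Finset.mem_coe, Finset.mem_sigma]
        constructor
        · exact mem_powersetCard.2 ⟨hWsub.trans hAX, hWcard⟩
        · rw [mem_filter]
          constructor
          · refine mem_powersetCard.2 ⟨?_, ?_⟩
            · intro x hx
              rw [mem_sdiff] at hx ⊢
              exact ⟨hAX hx.1, hx.2⟩
            · rw [card_sdiff_of_subset hWsub, hAcard, hWcard, hmulsucc]
              omega
          · intro hcon
            obtain ⟨R, hR, hRsub⟩ := hcon
            obtain ⟨S, hSF, hfrag⟩ := mem_image.1 hR
            rw [mem_filter] at hSF
            apply hAbad
            refine ⟨minWit F W S, (minWit_spec hSF.1).1, ?_⟩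
            intro x hx
            rcases mem_union.1 (minWit_subset_union_frag F W S hx) with h | h
            · exact hWsub h
            · rw [hfrag] at h
              exact (mem_sdiff.1 (hRsub h)).1
      · rintro ⟨A1, W1⟩ h1 ⟨A2, W2⟩ h2 heq
        simp only [Finset.mem_coe, Finset.mem_sigma, mem_filter] at h1 h2
        have hWW : W1 = W2 := congrArg Sigma.fst heq
        have hAA' : A1 \ W1 = A2 \ W2 := eq_of_heq (congr_arg_heq Sigma.snd heq)
        have hW1A : W1 ⊆ A1 := (mem_powersetCard.1 h1.2).1
        have hW2A : W2 ⊆ A2 := (mem_powersetCard.1 h2.2).1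
        subst hWW
        have : A1 = A2 := by
          rw [← Finset.union_sdiff_of_subset hW1A, ← Finset.union_sdiff_of_subset hW2A, hAA']
        subst this; rfl
    -- Step 2: apply IH for each W
    have step2 : ∀ W ∈ X'.powersetCard w,
        ((((X' \ W).powersetCard (t * w)).filter
          (fun A => ¬ ∃ R ∈ fnext r F W, R ⊆ A)).card : ℝ)
        ≤ (2 * Gam t (r / 2) + 1 - 2 * max (θ - Ep N p (gbad r F W)) 0)
            * ((X'.card - w).choose (t * w)) := by
      intro W hW
      obtain ⟨hWX, hWcard⟩ := mem_powersetCard.1 hW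
      have hcard : (X' \ W).card = X'.card - w := by rw [card_sdiff_of_subset hWX, hWcard]
      have happ := ih (r / 2) (X' \ W) (fnext r F W) (max (θ - Ep N p (gbad r F W)) 0)
        ?_ ?_ ?_ ?_ ?_ ?_ ?_
      · rw [hcard] at happ
        exact happ
      · -- fnext ⊆ X' \ W
        intro S hS
        obtain ⟨S', hS', hfrag⟩ := mem_image.1 hS
        rw [mem_filter] at hS'
        rw [← hfrag]
        intro x hx
        rw [frag, mem_sdiff] at hx
        rw [mem_sdiff]
        exact ⟨hFX _ (minWit_spec hS'.1).1 hx.1, hx.2⟩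
      · -- cards ≤ r/2
        intro S hS
        obtain ⟨S', hS', hfrag⟩ := mem_image.1 hS
        rw [mem_filter] at hS'
        have : ¬ (r < 2 * (frag F W S').card) := hS'.2
        rw [← hfrag]
        omega
      · -- r/2 < 2^t
        have : (2:ℕ) ^ (t + 1) = 2 * 2 ^ t := by rw [pow_succ]; ring
        omega
      · -- t*w ≤ card
        rw [hcard]; omega
      · -- ratio
        rw [hcard]
        refine le_trans ?_ hratio
        have : ((X'.card - w : ℕ) : ℝ) ≤ (X'.card : ℝ) := by
          exact_mod_cast Nat.sub_le _ _
        nlinarith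
      · -- θ_W ≤ coverCost fnext
        apply max_le
        · have := coverCost_fnext hp.le r F W
          linarith
        · exact coverCost_nonneg hp.le _
      · -- θ_W ≤ 1/2
        apply max_le
        · have := Ep_nonneg hp.le (gbad r F W)
          linarith
        · norm_num
    -- Step 3: sum the IH bounds
    have hXw : (X'.powersetCard w).card = X'.card.choose w := Finset.card_powersetCard w X'
    have hgbad_sum := count_gbad hp hw hFX hFr hratio
    have step3 : (∑ W ∈ X'.powersetCard w,
        ((((X' \ W).powersetCard (t * w)).filter
          (fun A => ¬ ∃ R ∈ fnext r F W, R ⊆ A)).card : ℝ))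
        ≤ (2 * Gam (t + 1) r + 1 - 2 * θ)
            * ((X'.card.choose w : ℝ) * ((X'.card - w).choose (t * w) : ℝ)) := by
      have hsum1 : (∑ W ∈ X'.powersetCard w,
          ((((X' \ W).powersetCard (t * w)).filter
            (fun A => ¬ ∃ R ∈ fnext r F W, R ⊆ A)).card : ℝ))
          ≤ ∑ W ∈ X'.powersetCard w,
              (2 * Gam t (r / 2) + 1 - 2 * max (θ - Ep N p (gbad r F W)) 0)
                * ((X'.card - w).choose (t * w)) :=
        Finset.sum_le_sum step2
      have hsum2 : ∑ W ∈ X'.powersetCard w,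
          (2 * Gam t (r / 2) + 1 - 2 * max (θ - Ep N p (gbad r F W)) 0)
            * ((X'.card - w).choose (t * w) : ℝ)
          ≤ ∑ W ∈ X'.powersetCard w,
              (2 * Gam t (r / 2) + 1 - 2 * θ + 2 * Ep N p (gbad r F W))
                * ((X'.card - w).choose (t * w) : ℝ) := by
        refine Finset.sum_le_sum fun W _ => ?_
        have h1 : θ - Ep N p (gbad r F W) ≤ max (θ - Ep N p (gbad r F W)) 0 := le_max_left _ _
        have h2 : (0:ℝ) ≤ ((X'.card - w).choose (t * w) : ℝ) := by positivity
        nlinarith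
      have hsum3 : ∑ W ∈ X'.powersetCard w,
          (2 * Gam t (r / 2) + 1 - 2 * θ + 2 * Ep N p (gbad r F W))
            * ((X'.card - w).choose (t * w) : ℝ)
          = ((2 * Gam t (r / 2) + 1 - 2 * θ) * (X'.card.choose w : ℝ)
              + 2 * ∑ W ∈ X'.powersetCard w, Ep N p (gbad r F W))
            * ((X'.card - w).choose (t * w) : ℝ) := by
        rw [← Finset.sum_mul]
        congr 1
        rw [Finset.sum_add_distrib, Finset.sum_const, hXw, nsmul_eq_mul, ← Finset.mul_sum]
        ring
      have hCpos : (0:ℝ) ≤ ((X'.card - w).choose (t * w) : ℝ) := by positivity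
      have hfinal : ((2 * Gam t (r / 2) + 1 - 2 * θ) * (X'.card.choose w : ℝ)
            + 2 * ∑ W ∈ X'.powersetCard w, Ep N p (gbad r F W))
          * ((X'.card - w).choose (t * w) : ℝ)
          ≤ (2 * Gam (t + 1) r + 1 - 2 * θ)
            * ((X'.card.choose w : ℝ) * ((X'.card - w).choose (t * w) : ℝ)) := by
        have h1 : (2 * Gam t (r / 2) + 1 - 2 * θ) * (X'.card.choose w : ℝ)
            + 2 * ∑ W ∈ X'.powersetCard w, Ep N p (gbad r F W)
            ≤ (2 * Gam (t + 1) r + 1 - 2 * θ) * (X'.card.choose w : ℝ) := by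
          have hG : Gam (t + 1) r = gammaF r + Gam t (r / 2) := rfl
          rw [hG]
          nlinarith [hgbad_sum]
        nlinarith
      calc (∑ W ∈ X'.powersetCard w,
          ((((X' \ W).powersetCard (t * w)).filter
            (fun A => ¬ ∃ R ∈ fnext r F W, R ⊆ A)).card : ℝ))
          ≤ _ := hsum1
        _ ≤ _ := hsum2
        _ = _ := hsum3
        _ ≤ _ := hfinal
    -- Step 4: combine
    have hid : X'.card.choose w * (X'.card - w).choose (t * w)
        = X'.card.choose ((t + 1) * w) * (((t + 1) * w).choose w) := by
      have := choose_id X'.card w (t * w) (by omega)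
      rw [show w + t * w = (t + 1) * w by ring] at this
      exact this
    have hCw_pos : 0 < ((t + 1) * w).choose w := Nat.choose_pos (by omega)
    have hcast : ((((X'.powersetCard ((t + 1) * w)).filter
          (fun A => ¬ ∃ R ∈ F, R ⊆ A)).card : ℝ)) * ((((t + 1) * w).choose w : ℕ) : ℝ)
        ≤ (2 * Gam (t + 1) r + 1 - 2 * θ)
            * ((X'.card.choose ((t + 1) * w) : ℝ) * ((((t + 1) * w).choose w : ℕ) : ℝ)) := by
      have hstep1R : ((((X'.powersetCard ((t + 1) * w)).filter
          (fun A => ¬ ∃ R ∈ F, R ⊆ A)).card : ℝ)) * ((((t + 1) * w).choose w : ℕ) : ℝ)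
          ≤ (∑ W ∈ X'.powersetCard w,
            ((((X' \ W).powersetCard (t * w)).filter
              (fun A => ¬ ∃ R ∈ fnext r F W, R ⊆ A)).card : ℝ)) := by
        have := step1
        push_cast
        exact_mod_cast this
      refine hstep1R.trans (step3.trans ?_)
      have : (X'.card.choose w : ℝ) * ((X'.card - w).choose (t * w) : ℝ)
          = (X'.card.choose ((t + 1) * w) : ℝ) * ((((t + 1) * w).choose w : ℕ) : ℝ) := by
        exact_mod_cast congrArg (fun x : ℕ => (x : ℝ)) hid
      rw [this]
    have hCw_posR : (0:ℝ) < ((((t + 1) * w).choose w : ℕ) : ℝ) := by exact_mod_cast hCw_pos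
    have := (mul_le_mul_iff_of_pos_right hCw_posR).1 (by
      calc ((((X'.powersetCard ((t + 1) * w)).filter
            (fun A => ¬ ∃ R ∈ F, R ⊆ A)).card : ℝ)) * ((((t + 1) * w).choose w : ℕ) : ℝ)
          ≤ (2 * Gam (t + 1) r + 1 - 2 * θ)
            * ((X'.card.choose ((t + 1) * w) : ℝ) * ((((t + 1) * w).choose w : ℕ) : ℝ)) := hcast
        _ = ((2 * Gam (t + 1) r + 1 - 2 * θ) * (X'.card.choose ((t + 1) * w) : ℝ))
            * ((((t + 1) * w).choose w : ℕ) : ℝ) := by ring)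
    exact this

/-! ### Monotonicity of the density of an upward-closed family across levels -/

lemma mono_step (H : Finset (Finset (Fin N))) (k : ℕ) (hk : k < N) :
    ((level N k ∩ cl N H).card : ℝ) / (N.choose k)
      ≤ ((level N (k + 1) ∩ cl N H).card : ℝ) / (N.choose (k + 1)) := by
  -- pair counting
  have key : ((level N k ∩ cl N H).card) * (N - k)
      ≤ ((level N (k + 1) ∩ cl N H).card) * (k + 1) := by
    have hinj := Finset.card_le_card_of_injOn
      (s := (level N k ∩ cl N H).sigma (fun A => Finset.univ \ A))
      (t := (level N (k + 1) ∩ cl N H).sigma (fun B => B))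
      (fun q => ⟨insert q.2 q.1, q.2⟩) ?_ ?_
    · have hL : ((level N k ∩ cl N H).sigma (fun A => Finset.univ \ A)).card
          = ((level N k ∩ cl N H).card) * (N - k) := by
        rw [Finset.card_sigma]
        rw [Finset.sum_congr rfl (fun A hA => by
          have hAlevel := Finset.mem_inter.1 hA |>.1
          have hAcard : A.card = k := (mem_powersetCard.1 hAlevel).2
          rw [card_sdiff_of_subset (subset_univ A), hAcard, card_univ, Fintype.card_fin])]
        rw [Finset.sum_const, smul_eq_mul, mul_comm]
      have hR : ((level N (k + 1) ∩ cl N H).sigma (fun B => B)).card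
          = ((level N (k + 1) ∩ cl N H).card) * (k + 1) := by
        rw [Finset.card_sigma]
        rw [Finset.sum_congr rfl (fun B hB => by
          have hBlevel := Finset.mem_inter.1 hB |>.1
          exact (mem_powersetCard.1 hBlevel).2)]
        rw [Finset.sum_const, smul_eq_mul, mul_comm]
      rw [hL, hR] at hinj
      exact hinj
    · rintro ⟨A, x⟩ hq
      rw [Finset.mem_coe, Finset.mem_sigma] at hq
      obtain ⟨hA, hx⟩ := hq
      rw [Finset.mem_inter] at hA
      obtain ⟨hAlevel, hAcl⟩ := hA
      have hxA : x ∉ A := (mem_sdiff.1 hx).2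
      rw [Finset.mem_coe, Finset.mem_sigma]
      constructor
      · rw [Finset.mem_inter]
        constructor
        · refine mem_powersetCard.2 ⟨subset_univ _, ?_⟩
          rw [card_insert_of_notMem hxA, (mem_powersetCard.1 hAlevel).2]
        · rw [cl, mem_filter] at hAcl ⊢
          obtain ⟨-, S, hSH, hSA⟩ := hAcl
          exact ⟨mem_univ _, S, hSH, hSA.trans (subset_insert _ _)⟩
      · exact mem_insert_self _ _
    · rintro ⟨A1, x1⟩ h1 ⟨A2, x2⟩ h2 heq
      simp only [Finset.mem_coe, Finset.mem_sigma, Finset.mem_inter] at h1 h2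
      have hxx : x1 = x2 := eq_of_heq (congr_arg_heq Sigma.snd heq)
      have hBB : insert x1 A1 = insert x2 A2 := congrArg Sigma.fst heq
      have hx1A : x1 ∉ A1 := (mem_sdiff.1 h1.2).2
      have hx2A : x2 ∉ A2 := (mem_sdiff.1 h2.2).2
      subst hxx
      have : A1 = A2 := by
        rw [← Finset.erase_insert hx1A, ← Finset.erase_insert hx2A, hBB]
      subst this; rfl
  -- convert to densities
  have hCk : (0:ℝ) < (N.choose k : ℝ) := by
    exact_mod_cast Nat.choose_pos (le_of_lt hk)
  have hCk1 : (0:ℝ) < (N.choose (k + 1) : ℝ) := by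
    exact_mod_cast Nat.choose_pos hk
  rw [div_le_div_iff₀ hCk hCk1]
  have hidR : (N.choose (k + 1) : ℝ) * ((k : ℝ) + 1) = (N.choose k : ℝ) * ((N - k : ℕ) : ℝ) := by
    exact_mod_cast Nat.choose_succ_right_eq N k
  have hkeyR : ((level N k ∩ cl N H).card : ℝ) * ((N - k : ℕ) : ℝ)
      ≤ ((level N (k + 1) ∩ cl N H).card : ℝ) * ((k : ℝ) + 1) := by
    exact_mod_cast key
  have hNk_pos : (0:ℝ) < ((N - k : ℕ) : ℝ) := by
    have : 0 < N - k := by omega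
    exact_mod_cast this
  have hk1_pos : (0:ℝ) < (k : ℝ) + 1 := by positivity
  -- a * Ck1 * (k+1) = Ck * (a * (N-k)) ≤ Ck * (b * (k+1)) = (b * Ck) * (k+1)
  have h5 : ((level N k ∩ cl N H).card : ℝ) * (N.choose (k + 1) : ℝ) * ((k:ℝ) + 1)
      ≤ (((level N (k + 1) ∩ cl N H).card : ℝ) * (N.choose k : ℝ)) * ((k:ℝ) + 1) := by
    calc ((level N k ∩ cl N H).card : ℝ) * (N.choose (k + 1) : ℝ) * ((k:ℝ) + 1)
        = (N.choose k : ℝ) * (((level N k ∩ cl N H).card : ℝ) * ((N - k : ℕ) : ℝ)) := by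
          rw [show ((level N k ∩ cl N H).card : ℝ) * (N.choose (k + 1) : ℝ) * ((k:ℝ) + 1)
            = ((level N k ∩ cl N H).card : ℝ) * ((N.choose (k + 1) : ℝ) * ((k:ℝ) + 1)) by ring,
            hidR]
          ring
      _ ≤ (N.choose k : ℝ) * (((level N (k + 1) ∩ cl N H).card : ℝ) * ((k:ℝ) + 1)) :=
          mul_le_mul_of_nonneg_left hkeyR (le_of_lt hCk)
      _ = (((level N (k + 1) ∩ cl N H).card : ℝ) * (N.choose k : ℝ)) * ((k:ℝ) + 1) := by ring
  exact (mul_le_mul_iff_of_pos_right hk1_pos).1 h5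

lemma mono_le (H : Finset (Finset (Fin N))) {k m : ℕ} (hkm : k ≤ m) (hm : m ≤ N) :
    ((level N k ∩ cl N H).card : ℝ) / (N.choose k)
      ≤ ((level N m ∩ cl N H).card : ℝ) / (N.choose m) := by
  induction m, hkm using Nat.le_induction with
  | base => exact le_refl _
  | succ m hkm ih =>
    exact (ih (by omega)).trans (mono_step H m (by omega))

end ParkPham

open ParkPham in
/-- Park–Pham covering theorem. -/
theorem park_pham_covering :
    ∃ L : ℝ, 0 < L ∧
      ∀ (N l : ℕ), 1 ≤ l → ∀ p : ℝ, 0 < p → p ≤ 1 →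
        ∀ H : Finset (Finset (Fin N)), (∀ S ∈ H, S.card ≤ l) →
          coverCost N p H ≥ 1 / 2 →
          ∀ m : ℕ, m = ⌊L * p * N * Real.logb 2 (l + 1)⌋₊ → m ≤ N →
            ((level N m ∩ cl N H).card : ℝ) ≥ 2 / 3 * (N.choose m : ℝ) := by
  refine ⟨10000, by norm_num, ?_⟩
  intro N l hl p hp hp1 H hbdd hcost m hm hmN
  classical
  by_cases hempty : (∅ : Finset (Fin N)) ∈ H
  · -- trivial case: everything is in the closure
    have hsub : level N m ⊆ cl N H := by
      intro T _
      rw [cl, mem_filter]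
      exact ⟨mem_univ _, ∅, hempty, empty_subset _⟩
    rw [Finset.inter_eq_left.2 hsub]
    rw [level, Finset.card_powersetCard, card_univ, Fintype.card_fin]
    have : (0:ℝ) ≤ (N.choose m : ℝ) := by positivity
    linarith
  · -- main case
    have hNp : (1:ℝ)/2 ≤ (N : ℝ) * p := by
      have hcov : Covers N ((Finset.univ : Finset (Fin N)).image
          (fun i => ({i} : Finset (Fin N)))) H := by
        intro S hS
        have hSne : S.Nonempty := by
          rcases Finset.eq_empty_or_nonempty S with h | h
          · exact absurd (h ▸ hS) hempty
          · exact h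
        obtain ⟨x, hx⟩ := hSne
        exact ⟨{x}, mem_image_of_mem _ (mem_univ x), Finset.singleton_subset_iff.2 hx⟩
      have h1 := coverCost_le_Ep hp.le hcov
      have hEp : Ep N p ((Finset.univ : Finset (Fin N)).image
          (fun i => ({i} : Finset (Fin N)))) = (N : ℝ) * p := by
        rw [Ep, Finset.sum_image (fun a _ b _ h => Finset.singleton_injective h)]
        simp [card_singleton, pow_one, Finset.sum_const, card_univ, Fintype.card_fin,
          nsmul_eq_mul]
      rw [hEp] at h1
      linarith [hcost]
    have hN_pos : (0:ℝ) < (N : ℝ) := by nlinarith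
    set w : ℕ := ⌈(4096:ℝ) * p * N⌉₊ with hw_def
    set t : ℕ := Nat.log 2 l + 1 with ht_def
    have hw1 : 1 ≤ w := by
      rw [hw_def]
      have : (0:ℝ) < 4096 * p * N := by positivity
      exact Nat.one_le_ceil_iff.2 this
    have hlt : l < 2 ^ t := Nat.lt_pow_succ_log_self (by norm_num) l
    have hlam1 : (1:ℝ) ≤ Real.logb 2 (l + 1) := by
      have h2 : ((l : ℝ) + 1) ≥ 2 := by
        have : (1:ℝ) ≤ (l : ℝ) := by exact_mod_cast hl
        linarith
      calc (1:ℝ) = Real.logb 2 2 := (Real.logb_self_eq_one (by norm_num)).symm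
        _ ≤ Real.logb 2 (l + 1) := Real.logb_le_logb_of_le (by norm_num) (by norm_num) h2
    have hlog : ((Nat.log 2 l : ℕ) : ℝ) ≤ Real.logb 2 (l + 1) := by
      have h2 : (2:ℝ) ^ (Nat.log 2 l) ≤ (l : ℝ) := by
        exact_mod_cast Nat.pow_log_le_self 2 (by omega : l ≠ 0)
      have h3 : (2:ℝ) ^ (Nat.log 2 l) ≤ (l : ℝ) + 1 := by linarith
      calc ((Nat.log 2 l : ℕ) : ℝ) = Real.logb 2 ((2:ℝ) ^ (Nat.log 2 l)) := by
            rw [Real.logb_pow, Real.logb_self_eq_one (by norm_num)]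
            ring
        _ ≤ Real.logb 2 (l + 1) :=
            Real.logb_le_logb_of_le (by norm_num) (by positivity) h3
    have htR : (t : ℝ) ≤ 2 * Real.logb 2 (l + 1) := by
      rw [ht_def]
      push_cast
      linarith
    have hwR : (w : ℝ) ≤ 4098 * p * N := by
      have h1 : (w : ℝ) < 4096 * p * N + 1 := by
        rw [hw_def]
        exact Nat.ceil_lt_add_one (by positivity)
      have h2 : (1:ℝ) ≤ 2 * (p * N) := by nlinarith
      nlinarith
    have htw_m : t * w ≤ m := by
      rw [hm]
      apply Nat.le_floor
      have hlogpos : (0:ℝ) < Real.logb 2 (l + 1) := by linarith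
      have htpos : (0:ℝ) ≤ (t : ℝ) := by positivity
      calc ((t * w : ℕ) : ℝ) = (t : ℝ) * (w : ℝ) := by push_cast; ring
        _ ≤ (2 * Real.logb 2 (l + 1)) * (4098 * p * N) := by
            apply mul_le_mul htR hwR (by positivity) (by positivity)
        _ = 8196 * p * N * Real.logb 2 (l + 1) := by ring
        _ ≤ 10000 * p * N * Real.logb 2 (l + 1) := by nlinarith
    have htwN : t * w ≤ N := le_trans htw_m hmN
    -- apply the main claim
    have hcardU : (Finset.univ : Finset (Fin N)).card = N := by
      rw [card_univ, Fintype.card_fin]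
    have hmain := main_claim (N := N) hp hw1 t l Finset.univ H (1/2)
      (fun S _ => subset_univ S) hbdd hlt (by rw [hcardU]; exact htwN)
      (by rw [hcardU]; rw [hw_def]; exact Nat.le_ceil _) hcost le_rfl
    rw [hcardU] at hmain
    -- bad count at level t*w
    have hGam := ParkPham.Gam_le t l
    have hGpow : (0:ℝ) ≤ (1/32 : ℝ) ^ l := by positivity
    have hGam16 : ParkPham.Gam t l ≤ 1/16 := by
      have := hGam
      linarith
    have hbad_le : (((Finset.univ.powersetCard (t * w) : Finset (Finset (Fin N))).filter
        (fun A => ¬ ∃ R ∈ H, R ⊆ A)).card : ℝ) ≤ (1/8) * (N.choose (t * w) : ℝ) := by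
      have hCnn : (0:ℝ) ≤ (N.choose (t * w) : ℝ) := by positivity
      calc (((Finset.univ.powersetCard (t * w) : Finset (Finset (Fin N))).filter
          (fun A => ¬ ∃ R ∈ H, R ⊆ A)).card : ℝ)
          ≤ (2 * ParkPham.Gam t l + 1 - 2 * (1/2)) * (N.choose (t * w) : ℝ) := hmain
        _ = 2 * ParkPham.Gam t l * (N.choose (t * w) : ℝ) := by ring
        _ ≤ (1/8) * (N.choose (t * w) : ℝ) := by nlinarith
    -- good count at level t*w
    have hsplit : ((level N (t * w)).filter (fun A => ∃ R ∈ H, R ⊆ A)).card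
        + ((level N (t * w)).filter (fun A => ¬ ∃ R ∈ H, R ⊆ A)).card
        = (level N (t * w)).card :=
      Finset.card_filter_add_card_filter_not _
    have hinter : level N (t * w) ∩ cl N H
        = (level N (t * w)).filter (fun A => ∃ R ∈ H, R ⊆ A) := by
      ext T
      simp only [Finset.mem_inter, mem_filter, cl, level, Finset.mem_univ, true_and]
    have hlevelcard : (level N (t * w)).card = N.choose (t * w) := by
      rw [level, Finset.card_powersetCard, card_univ, Fintype.card_fin]
    have hgood : ((level N (t * w) ∩ cl N H).card : ℝ) ≥ (7/8) * (N.choose (t * w) : ℝ) := by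
      have h1 : ((level N (t * w) ∩ cl N H).card : ℝ)
          = (N.choose (t * w) : ℝ)
            - (((level N (t * w)).filter (fun A => ¬ ∃ R ∈ H, R ⊆ A)).card : ℝ) := by
        rw [hinter]
        have := hsplit
        rw [hlevelcard] at this
        have hcast : (((level N (t * w)).filter (fun A => ∃ R ∈ H, R ⊆ A)).card : ℝ)
            + (((level N (t * w)).filter (fun A => ¬ ∃ R ∈ H, R ⊆ A)).card : ℝ)
            = (N.choose (t * w) : ℝ) := by exact_mod_cast this
        linarith
      have h2 : level N (t * w) = (Finset.univ.powersetCard (t * w) : Finset (Finset (Fin N))) := rfl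
      rw [h1, h2]
      linarith [hbad_le]
    -- monotonicity
    have hmono := ParkPham.mono_le (N := N) H htw_m hmN
    have hCtw : (0:ℝ) < (N.choose (t * w) : ℝ) := by
      exact_mod_cast Nat.choose_pos htwN
    have hCm : (0:ℝ) < (N.choose m : ℝ) := by
      exact_mod_cast Nat.choose_pos hmN
    have hdtw : ((level N (t * w) ∩ cl N H).card : ℝ) / (N.choose (t * w)) ≥ 7/8 := by
      rw [ge_iff_le, le_div_iff₀ hCtw]
      linarith
    have hdm : ((level N m ∩ cl N H).card : ℝ) / (N.choose m) ≥ 7/8 :=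
      le_trans hdtw hmono
    rw [ge_iff_le, le_div_iff₀ hCm] at hdm
    rw [ge_iff_le]
    linarith
end

section
/- Restriction inequality for cover cost: Let H be a family of subsets of X and W ⊆ X. Let H_W = {S \ W : S ∈ H}, let H'_W be the minimal sets of H_W, and write H'_W = G_W ∪ H̃_W as any partition. Then f(H̃_W) ≥ f(H) − f(G_W), where all cover costs are computed with the same parameter p (and f(H'_W) ≥ f(H), since any cover of H'_W covers H). -/
open Finset
open scoped Classical

lemma valSet_finite (N : ℕ) (p : ℝ) (F : Finset (Finset (Fin N))) :
    {x : ℝ | ∃ G : Finset (Finset (Fin N)), Covers N G F ∧ x = Ep N p G}.Finite := by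
  have : {x : ℝ | ∃ G : Finset (Finset (Fin N)), Covers N G F ∧ x = Ep N p G}
      ⊆ (fun G => Ep N p G) '' Set.univ := by
    rintro x ⟨G, _, rfl⟩; exact ⟨G, trivial, rfl⟩
  exact (Set.finite_univ.image _).subset this

lemma valSet_nonempty (N : ℕ) (p : ℝ) (F : Finset (Finset (Fin N))) :
    {x : ℝ | ∃ G : Finset (Finset (Fin N)), Covers N G F ∧ x = Ep N p G}.Nonempty :=
  ⟨Ep N p F, F, fun S hS => ⟨S, hS, subset_rfl⟩, rfl⟩

lemma coverCost_attained (N : ℕ) (p : ℝ) (F : Finset (Finset (Fin N))) :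
    ∃ G : Finset (Finset (Fin N)), Covers N G F ∧ coverCost N p F = Ep N p G :=
  (valSet_nonempty N p F).csInf_mem (valSet_finite N p F)

lemma coverCost_le (N : ℕ) (p : ℝ) (F G : Finset (Finset (Fin N)))
    (h : Covers N G F) : coverCost N p F ≤ Ep N p G :=
  csInf_le (valSet_finite N p F).bddBelow ⟨G, h, rfl⟩

/-- Restriction inequality for cover cost: if the minimal sets `H'_W` of
`H_W = {S \ W : S ∈ H}` are partitioned as `G_W ∪ H̃_W`, then
`f(H̃_W) ≥ f(H) − f(G_W)`, and `f(H'_W) ≥ f(H)`. -/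
theorem restriction_cover_cost {N : ℕ} (p : ℝ) (hp0 : 0 ≤ p) (hp1 : p ≤ 1)
    (H : Finset (Finset (Fin N))) (W : Finset (Fin N))
    (HW H'W Gw Htil : Finset (Finset (Fin N)))
    (hHW : HW = H.image (fun S => S \ W))
    (hH'W : H'W = HW.filter (fun T => ∀ T' ∈ HW, T' ⊆ T → T' = T))
    (hpart : Gw ∪ Htil = H'W) (hdisj : Disjoint Gw Htil) :
    coverCost N p Htil ≥ coverCost N p H - coverCost N p Gw ∧
    coverCost N p H'W ≥ coverCost N p H := by
  -- every member of HW contains a minimal member, i.e. a member of H'W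
  have hminimal : ∀ T ∈ HW, ∃ T' ∈ H'W, T' ⊆ T := by
    intro T hT
    obtain ⟨m, hm, hmin⟩ : ∃ m ∈ HW.filter (fun T' => T' ⊆ T),
        ∀ x ∈ HW.filter (fun T' => T' ⊆ T), ¬ x < m := by
      obtain ⟨m, hm1, hm2⟩ := Finset.exists_minimal (s := HW.filter (fun T' => T' ⊆ T))
        ⟨T, Finset.mem_filter.mpr ⟨hT, subset_rfl⟩⟩
      exact ⟨m, hm1, fun x hx hlt => (not_le_of_gt hlt) (hm2 hx hlt.le)⟩
    obtain ⟨hmHW, hmT⟩ := Finset.mem_filter.mp hm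
    refine ⟨m, ?_, hmT⟩
    rw [hH'W, Finset.mem_filter]
    refine ⟨hmHW, fun T' hT' hsub => ?_⟩
    by_contra hne
    exact hmin T' (Finset.mem_filter.mpr ⟨hT', hsub.trans hmT⟩)
      (lt_of_le_of_ne hsub hne)
  -- any cover of H'W is a cover of H
  have hcov : ∀ G : Finset (Finset (Fin N)), Covers N G H'W → Covers N G H := by
    intro G hG S hS
    have hSW : S \ W ∈ HW := by
      rw [hHW]; exact Finset.mem_image_of_mem _ hS
    obtain ⟨T', hT', hsub⟩ := hminimal _ hSW
    obtain ⟨g, hg, hgs⟩ := hG T' hT'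
    exact ⟨g, hg, hgs.trans (hsub.trans Finset.sdiff_subset)⟩
  constructor
  · obtain ⟨G1, hG1, e1⟩ := coverCost_attained N p Gw
    obtain ⟨G2, hG2, e2⟩ := coverCost_attained N p Htil
    have hunion : Covers N (G1 ∪ G2) H'W := by
      intro S hS
      rw [← hpart, Finset.mem_union] at hS
      rcases hS with hS | hS
      · obtain ⟨g, hg, hgs⟩ := hG1 S hS
        exact ⟨g, Finset.mem_union_left _ hg, hgs⟩
      · obtain ⟨g, hg, hgs⟩ := hG2 S hS
        exact ⟨g, Finset.mem_union_right _ hg, hgs⟩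
    have hle : coverCost N p H ≤ Ep N p (G1 ∪ G2) :=
      coverCost_le N p H _ (hcov _ hunion)
    have hsum : Ep N p (G1 ∪ G2) ≤ Ep N p G1 + Ep N p G2 := by
      unfold Ep
      have h0 : (0:ℝ) ≤ ∑ S ∈ G1 ∩ G2, p ^ S.card :=
        Finset.sum_nonneg fun S _ => pow_nonneg hp0 _
      have := Finset.sum_union_inter (s₁ := G1) (s₂ := G2)
        (f := fun S : Finset (Fin N) => p ^ S.card)
      linarith
    rw [e1, e2] at *
    linarith
  · obtain ⟨G, hG, e⟩ := coverCost_attained N p H'W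
    rw [e]
    exact coverCost_le N p H _ (hcov _ hG)
end
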